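/- arXiv:1111.5879 — 9 statements merged into one kernel-verified Lean document; each statement's English description precedes it below -/
import Mathlib

section
/- Let s > 3/2 and r ∈ ℝ satisfy r ≤ 1/2 and s + r ≥ 2. Then there exists a constant C = C(s, r) > 0 such that for all 2π-periodic functions f, g on the circle 𝕋, ‖fg‖_{H^{r-1}(𝕋)} ≤ C ‖f‖_{H^{s-1}(𝕋)} ‖g‖_{H^{r-1}(𝕋)}. -/
open MeasureTheory Function
open scoped ENNReal

noncomputable section ProdSobAux

/-- weight `(1+n^2)^t` as `ℝ≥0∞`. -/
def wE (t : ℝ) (n : ℤ) : ℝ≥0∞ := ENNReal.ofReal ((1 + (n : ℝ) ^ 2) ^ t)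

lemma wbase_pos (n : ℤ) : (0:ℝ) < 1 + (n : ℝ) ^ 2 := by positivity

lemma wbase_one_le (n : ℤ) : (1:ℝ) ≤ 1 + (n : ℝ) ^ 2 := by nlinarith [sq_nonneg ((n:ℝ))]

lemma wE_mul (t u : ℝ) (n : ℤ) : wE t n * wE u n = wE (t + u) n := by
  rw [wE, wE, wE, ← ENNReal.ofReal_mul (by positivity), ← Real.rpow_add (wbase_pos n)]

lemma wE_zero (n : ℤ) : wE 0 n = 1 := by simp [wE]

lemma wE_ne_top (t : ℝ) (n : ℤ) : wE t n ≠ ∞ := ENNReal.ofReal_ne_top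

lemma wE_sq (t : ℝ) (n : ℤ) : (wE t n) ^ 2 = wE (2 * t) n := by
  rw [sq, wE_mul]; ring_nf

/-- Peetre-type inequality piece. -/
lemma key1 {c : ℝ} (hc : 0 ≤ c) (n k : ℤ) :
    wE c (n - k) ≤ ENNReal.ofReal (4 ^ c) * (wE c n + wE c k) := by
  have h1 : (1 + ((n - k : ℤ) : ℝ) ^ 2) ≤ 4 * max (1 + (n:ℝ)^2) (1 + (k:ℝ)^2) := by
    rcases le_total (1 + (n:ℝ)^2) (1 + (k:ℝ)^2) with h | h
    · rw [max_eq_right h]; push_cast; nlinarith [sq_nonneg ((n:ℝ) + k)]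
    · rw [max_eq_left h]; push_cast; nlinarith [sq_nonneg ((n:ℝ) + k)]
  have h2 : (1 + ((n - k : ℤ) : ℝ) ^ 2) ^ c ≤ 4 ^ c * ((1 + (n:ℝ)^2) ^ c + (1 + (k:ℝ)^2) ^ c) := by
    calc (1 + ((n - k : ℤ) : ℝ) ^ 2) ^ c
        ≤ (4 * max (1 + (n:ℝ)^2) (1 + (k:ℝ)^2)) ^ c :=
          Real.rpow_le_rpow (by positivity) h1 hc
      _ = 4 ^ c * (max (1 + (n:ℝ)^2) (1 + (k:ℝ)^2)) ^ c := by
          rw [Real.mul_rpow (by norm_num) (by positivity)]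
      _ ≤ 4 ^ c * ((1 + (n:ℝ)^2) ^ c + (1 + (k:ℝ)^2) ^ c) := by
          gcongr
          rcases le_total (1 + (n:ℝ)^2) (1 + (k:ℝ)^2) with h | h
          · rw [max_eq_right h]
            nlinarith [Real.rpow_nonneg (le_of_lt (wbase_pos n)) c]
          · rw [max_eq_left h]
            nlinarith [Real.rpow_nonneg (le_of_lt (wbase_pos k)) c]
  calc wE c (n - k) ≤ ENNReal.ofReal (4 ^ c * ((1 + (n:ℝ)^2) ^ c + (1 + (k:ℝ)^2) ^ c)) :=
        ENNReal.ofReal_le_ofReal h2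
    _ = ENNReal.ofReal (4 ^ c) * (wE c n + wE c k) := by
        rw [ENNReal.ofReal_mul (by positivity), ENNReal.ofReal_add (by positivity) (by positivity)]
        rfl

/-- `x^{-β} y^{-γ} ≤ x^{-(β+γ)} + y^{-(β+γ)}` for bases ≥ 1. -/
lemma key2 {β γ : ℝ} (hβ : 0 ≤ β) (hγ : 0 ≤ γ) (k m : ℤ) :
    wE (-β) k * wE (-γ) m ≤ wE (-(β + γ)) k + wE (-(β + γ)) m := by
  rw [wE, wE, wE, wE, ← ENNReal.ofReal_mul (by positivity),
    ← ENNReal.ofReal_add (by positivity) (by positivity)]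
  apply ENNReal.ofReal_le_ofReal
  set x := 1 + (k:ℝ)^2 with hxdef
  set y := 1 + (m:ℝ)^2 with hydef
  have hx := wbase_one_le k
  have hy := wbase_one_le m
  rcases le_total x y with h | h
  · calc x ^ (-β) * y ^ (-γ) ≤ x ^ (-β) * x ^ (-γ) := by
          apply mul_le_mul_of_nonneg_left
            (Real.rpow_le_rpow_of_nonpos (by linarith) h (by linarith))
            (Real.rpow_nonneg (by linarith) _)
      _ = x ^ (-(β + γ)) := by rw [← Real.rpow_add (by linarith)]; ring_nf
      _ ≤ x ^ (-(β + γ)) + y ^ (-(β+γ)) := by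
          nlinarith [Real.rpow_nonneg (by linarith : (0:ℝ) ≤ y) (-(β+γ))]
  · calc x ^ (-β) * y ^ (-γ) ≤ y ^ (-β) * y ^ (-γ) := by
          apply mul_le_mul_of_nonneg_right
            (Real.rpow_le_rpow_of_nonpos (by linarith) h (by linarith))
            (Real.rpow_nonneg (by linarith) _)
      _ = y ^ (-(β + γ)) := by rw [← Real.rpow_add (by linarith)]; ring_nf
      _ ≤ x ^ (-(β + γ)) + y ^ (-(β+γ)) := by
          nlinarith [Real.rpow_nonneg (by linarith : (0:ℝ) ≤ x) (-(β+γ))]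

/-- summability of `(1+k^2)^{-a}` over `ℤ` for `a > 1/2`. -/
lemma summable_wR {a : ℝ} (ha : 1/2 < a) :
    Summable (fun k : ℤ => (1 + (k : ℝ) ^ 2) ^ (-a)) := by
  have h2a : 1 < 2 * a := by linarith
  have hs : Summable (fun k : ℤ => |(k : ℝ)| ^ (-(2*a))) := Real.summable_abs_int_rpow h2a
  have hδ : Summable (fun k : ℤ => if k = 0 then (1:ℝ) else 0) := by
    apply summable_of_ne_finset_zero (s := ({0} : Finset ℤ))
    intro k hk
    simp only [Finset.mem_singleton] at hk
    simp [hk]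
  apply Summable.of_nonneg_of_le (fun k => by positivity) (fun k => ?_) (hs.add hδ)
  rcases eq_or_ne k 0 with rfl | hk
  · have h2 : (0:ℝ) ≤ |((0:ℤ):ℝ)| ^ (-(2*a)) := by positivity
    have h1 : (1 + ((0:ℤ):ℝ)^2) ^ (-a) = 1 := by norm_num
    rw [h1, if_pos rfl]
    linarith
  · have habs : (1:ℤ) ≤ |k| := Int.one_le_abs hk
    have hk1 : (1:ℝ) ≤ |(k:ℝ)| := by
      rw [← Int.cast_abs]
      exact_mod_cast habs
    have hsq : |(k:ℝ)| ^ (-(2*a)) = (|(k:ℝ)| ^ (2:ℕ)) ^ (-a) := by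
      rw [← Real.rpow_natCast |(k:ℝ)| 2, ← Real.rpow_mul (abs_nonneg _)]
      norm_num
    have hle : |(k:ℝ)| ^ (2:ℕ) ≤ 1 + (k:ℝ)^2 := by
      rw [sq_abs]
      linarith
    have : (1 + (k:ℝ)^2) ^ (-a) ≤ (|(k:ℝ)| ^ (2:ℕ)) ^ (-a) :=
      Real.rpow_le_rpow_of_nonpos (by positivity) hle (by linarith)
    rw [hsq, if_neg hk]
    linarith

end ProdSobAux

noncomputable section ProdSobAux2

open scoped ENNReal

lemma enn_meas (f : ℤ → ℝ≥0∞) : AEMeasurable f (MeasureTheory.Measure.count) :=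
  (measurable_from_top.comp measurable_id).aemeasurable.mono_measure le_rfl

lemma enn_cs (f g : ℤ → ℝ≥0∞) :
    (∑' k, f k * g k) ^ 2 ≤ (∑' k, (f k) ^ 2) * (∑' k, (g k) ^ 2) := by
  have hconj : (2:ℝ).HolderConjugate 2 := Real.HolderConjugate.two_two
  have h := ENNReal.lintegral_mul_le_Lp_mul_Lq (MeasureTheory.Measure.count (α := ℤ)) hconj
    (f := f) (g := g) (enn_meas f) (enn_meas g)
  simp only [Pi.mul_apply, MeasureTheory.lintegral_count] at h
  have h2 : ∀ x : ℝ≥0∞, x ^ (2:ℝ) = x ^ (2:ℕ) := fun x => by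
    rw [← ENNReal.rpow_natCast x 2]; norm_num
  rw [show (1/(2:ℝ)) = (2:ℝ)⁻¹ by norm_num] at h
  calc (∑' k, f k * g k) ^ 2
      ≤ ((∑' k, f k ^ (2:ℝ)) ^ (2:ℝ)⁻¹ * (∑' k, g k ^ (2:ℝ)) ^ (2:ℝ)⁻¹) ^ 2 := by
        exact pow_le_pow_left' h 2
    _ = (∑' k, (f k) ^ 2) * (∑' k, (g k) ^ 2) := by
        have e1 : (∑' k, f k ^ (2:ℝ)) = ∑' k, (f k) ^ 2 := tsum_congr (fun k => h2 (f k))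
        have e2 : (∑' k, g k ^ (2:ℝ)) = ∑' k, (g k) ^ 2 := tsum_congr (fun k => h2 (g k))
        rw [e1, e2, mul_pow,
            ← ENNReal.rpow_natCast ((∑' k, (f k) ^ 2) ^ (2:ℝ)⁻¹) 2,
            ← ENNReal.rpow_natCast ((∑' k, (g k) ^ 2) ^ (2:ℝ)⁻¹) 2,
            ← ENNReal.rpow_mul, ← ENNReal.rpow_mul]
        norm_num

lemma enn_cs_w (u v : ℤ → ℝ≥0∞) :
    (∑' k, u k * v k) ^ 2 ≤ (∑' k, u k) * (∑' k, u k * (v k) ^ 2) := by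
  have hsq : ∀ x : ℝ≥0∞, x ^ ((1:ℝ)/2) * x ^ ((1:ℝ)/2) = x := by
    intro x
    rw [← ENNReal.rpow_add_of_nonneg _ _ (by norm_num) (by norm_num)]
    norm_num
  have h := enn_cs (fun k => (u k) ^ ((1:ℝ)/2)) (fun k => (u k) ^ ((1:ℝ)/2) * v k)
  have e0 : ∀ k, (u k) ^ ((1:ℝ)/2) * ((u k) ^ ((1:ℝ)/2) * v k) = u k * v k := by
    intro k; rw [← mul_assoc, hsq]
  have e1 : ∀ k, ((u k) ^ ((1:ℝ)/2)) ^ 2 = u k := by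
    intro k; rw [sq, hsq]
  have e2 : ∀ k, ((u k) ^ ((1:ℝ)/2) * v k) ^ 2 = u k * (v k) ^ 2 := by
    intro k; rw [mul_pow, sq ((u k) ^ ((1:ℝ)/2)), hsq]
  calc (∑' k, u k * v k) ^ 2
      = (∑' k, (u k) ^ ((1:ℝ)/2) * ((u k) ^ ((1:ℝ)/2) * v k)) ^ 2 := by
        rw [tsum_congr e0]
    _ ≤ (∑' k, ((u k) ^ ((1:ℝ)/2)) ^ 2) * (∑' k, ((u k) ^ ((1:ℝ)/2) * v k) ^ 2) := h
    _ = (∑' k, u k) * (∑' k, u k * (v k) ^ 2) := by rw [tsum_congr e1, tsum_congr e2]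

lemma sq_add_le (x y : ℝ≥0∞) : (x + y) ^ 2 ≤ 4 * (x ^ 2 + y ^ 2) := by
  rcases le_total x y with h | h
  · calc (x + y)^2 ≤ (y + y)^2 := by gcongr
      _ = 4 * y^2 := by ring
      _ ≤ 4 * (x^2 + y^2) := by gcongr; exact le_add_self
  · calc (x + y)^2 ≤ (x + x)^2 := by gcongr
      _ = 4 * x^2 := by ring
      _ ≤ 4 * (x^2 + y^2) := by gcongr; exact le_add_right le_rfl

lemma tsum_shift_sub (h : ℤ → ℝ≥0∞) (k : ℤ) : (∑' n, h (n - k)) = ∑' n, h n :=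
  (Equiv.subRight k).tsum_eq h

lemma tsum_shift_add (h : ℤ → ℝ≥0∞) (k : ℤ) : (∑' m, h (m + k)) = ∑' n, h n :=
  (Equiv.addRight k).tsum_eq h

/-- The core sequence-space bilinear estimate. -/
lemma core_seq {a a' : ℝ} (ha : 1/2 < a) (h1 : 1/2 ≤ a') (h2 : a' ≤ a) (F G : ℤ → ℝ≥0∞) :
    (∑' n, wE (-a') n * (∑' k, F k * G (n - k)) ^ 2) ≤
      (ENNReal.ofReal (4 ^ (a'/2))) ^ 2 * 12 * (∑' j, wE (-a) j) *
        ((∑' k, wE a k * (F k) ^ 2) * (∑' m, wE (-a') m * (G m) ^ 2)) := by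
  set e4 : ℝ≥0∞ := ENNReal.ofReal (4 ^ (a'/2)) with he4
  set K : ℝ≥0∞ := ∑' j, wE (-a) j with hK
  set A : ℤ → ℝ≥0∞ := fun k => wE (a/2) k * F k with hA
  set B : ℤ → ℝ≥0∞ := fun m => wE (-a'/2) m * G m with hB
  have hF : ∀ k, F k = wE (-a/2) k * A k := by
    intro k
    rw [hA, ← mul_assoc, wE_mul, show -a/2 + a/2 = (0:ℝ) by ring, wE_zero, one_mul]
  have hG : ∀ m, G m = wE (a'/2) m * B m := by
    intro m
    rw [hB, ← mul_assoc, wE_mul, show a'/2 + -a'/2 = (0:ℝ) by ring, wE_zero, one_mul]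
  have hAsq : (∑' k, (A k) ^ 2) = ∑' k, wE a k * (F k) ^ 2 := by
    apply tsum_congr; intro k
    rw [hA, mul_pow, wE_sq]
    ring_nf
  have hBsq : (∑' m, (B m) ^ 2) = ∑' m, wE (-a') m * (G m) ^ 2 := by
    apply tsum_congr; intro m
    rw [hB, mul_pow, wE_sq]
    ring_nf
  set α2 : ℝ≥0∞ := ∑' k, (A k) ^ 2 with hα2
  set β2 : ℝ≥0∞ := ∑' m, (B m) ^ 2 with hβ2
  set T1 : ℤ → ℝ≥0∞ := fun n => ∑' k, wE (-a/2) k * A k * B (n - k) with hT1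
  set T2 : ℤ → ℝ≥0∞ := fun n => wE (-a'/2) n * ∑' k, wE ((a' - a)/2) k * A k * B (n - k) with hT2
  -- Step 1 : pointwise bound
  have step1 : ∀ n, wE (-a') n * (∑' k, F k * G (n - k)) ^ 2 ≤ e4 ^ 2 * (T1 n + T2 n) ^ 2 := by
    intro n
    have hw : wE (-a') n = (wE (-a'/2) n) ^ 2 := by rw [wE_sq]; ring_nf
    rw [hw, ← mul_pow, ← mul_pow]
    apply pow_le_pow_left' _ 2
    rw [← ENNReal.tsum_mul_left]
    have hpoint : ∀ k, wE (-a'/2) n * (F k * G (n - k)) ≤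
        e4 * (wE (-a/2) k * A k * B (n - k) +
          wE (-a'/2) n * (wE ((a' - a)/2) k * A k * B (n - k))) := by
      intro k
      have hk1 := key1 (c := a'/2) (by linarith) n k
      calc wE (-a'/2) n * (F k * G (n - k))
          = wE (a'/2) (n - k) * (wE (-a'/2) n * (wE (-a/2) k * A k) * B (n - k)) := by
            rw [hF k, hG (n - k)]; ring
        _ ≤ (e4 * (wE (a'/2) n + wE (a'/2) k)) *
              (wE (-a'/2) n * (wE (-a/2) k * A k) * B (n - k)) := by
            gcongr
        _ = e4 * ((wE (a'/2) n * wE (-a'/2) n) * (wE (-a/2) k * A k * B (n - k)) +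
              wE (-a'/2) n * ((wE (a'/2) k * wE (-a/2) k) * A k * B (n - k))) := by
            ring
        _ = e4 * (wE (-a/2) k * A k * B (n - k) +
              wE (-a'/2) n * (wE ((a' - a)/2) k * A k * B (n - k))) := by
            have hw0 : wE (a'/2) n * wE (-a'/2) n = 1 := by
              rw [wE_mul, show a'/2 + -a'/2 = (0:ℝ) by ring, wE_zero]
            have hw1 : wE (a'/2) k * wE (-a/2) k = wE ((a' - a)/2) k := by
              rw [wE_mul]; congr 1; ring
            rw [hw0, hw1, one_mul]
    calc (∑' k, wE (-a'/2) n * (F k * G (n - k)))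
        ≤ ∑' k, e4 * (wE (-a/2) k * A k * B (n - k) +
            wE (-a'/2) n * (wE ((a' - a)/2) k * A k * B (n - k))) :=
          ENNReal.tsum_le_tsum hpoint
      _ = e4 * (T1 n + T2 n) := by
          rw [ENNReal.tsum_mul_left, ENNReal.tsum_add, ENNReal.tsum_mul_left]
  -- Step 3 : T1 bound
  have step3 : (∑' n, (T1 n) ^ 2) ≤ K * α2 * β2 := by
    set S1 : ℝ≥0∞ := ∑' k, wE (-a/2) k * A k with hS1
    have hS1sq : S1 ^ 2 ≤ K * α2 := by
      have := enn_cs (fun k => wE (-a/2) k) A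
      calc S1 ^ 2 ≤ (∑' k, (wE (-a/2) k) ^ 2) * (∑' k, (A k) ^ 2) := this
        _ = K * α2 := by
            congr 1
            apply tsum_congr; intro k
            rw [wE_sq]; ring_nf
    have hcs : ∀ n, (T1 n) ^ 2 ≤ S1 * (∑' k, (wE (-a/2) k * A k) * (B (n - k)) ^ 2) := by
      intro n
      exact enn_cs_w (fun k => wE (-a/2) k * A k) (fun k => B (n - k))
    calc (∑' n, (T1 n) ^ 2)
        ≤ ∑' n, S1 * (∑' k, (wE (-a/2) k * A k) * (B (n - k)) ^ 2) :=
          ENNReal.tsum_le_tsum hcs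
      _ = S1 * ∑' n, (∑' k, (wE (-a/2) k * A k) * (B (n - k)) ^ 2) := ENNReal.tsum_mul_left
      _ = S1 * ∑' k, (∑' n, (wE (-a/2) k * A k) * (B (n - k)) ^ 2) := by rw [ENNReal.tsum_comm]
      _ = S1 * ∑' k, (wE (-a/2) k * A k) * β2 := by
          congr 1
          apply tsum_congr; intro k
          rw [ENNReal.tsum_mul_left, tsum_shift_sub (fun j => (B j)^2) k]
      _ = S1 * S1 * β2 := by rw [ENNReal.tsum_mul_right, ← mul_assoc]
      _ = S1 ^ 2 * β2 := by ring
      _ ≤ K * α2 * β2 := by gcongr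
  -- Step 4 : T2 bound
  have step4 : (∑' n, (T2 n) ^ 2) ≤ 2 * K * α2 * β2 := by
    have hcs : ∀ n, (T2 n) ^ 2 ≤
        wE (-a') n * (α2 * ∑' k, wE (a' - a) k * (B (n - k)) ^ 2) := by
      intro n
      have hw : (wE (-a'/2) n) ^ 2 = wE (-a') n := by rw [wE_sq]; ring_nf
      rw [hT2]
      simp only []
      rw [mul_pow, hw]
      gcongr
      have hre : (∑' k, wE ((a' - a)/2) k * A k * B (n - k)) =
          ∑' k, A k * (wE ((a' - a)/2) k * B (n - k)) := by
        apply tsum_congr; intro k; ring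
      rw [hre]
      calc (∑' k, A k * (wE ((a' - a)/2) k * B (n - k))) ^ 2
          ≤ (∑' k, (A k) ^ 2) * (∑' k, (wE ((a' - a)/2) k * B (n - k)) ^ 2) :=
            enn_cs A _
        _ = α2 * ∑' k, wE (a' - a) k * (B (n - k)) ^ 2 := by
            congr 1
            apply tsum_congr; intro k
            rw [mul_pow, wE_sq]
            ring_nf
    calc (∑' n, (T2 n) ^ 2)
        ≤ ∑' n, wE (-a') n * (α2 * ∑' k, wE (a' - a) k * (B (n - k)) ^ 2) :=
          ENNReal.tsum_le_tsum hcs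
      _ = α2 * ∑' n, ∑' k, wE (-a') n * (wE (a' - a) k * (B (n - k)) ^ 2) := by
          rw [← ENNReal.tsum_mul_left]
          apply tsum_congr; intro n
          rw [ENNReal.tsum_mul_left]
          ring
      _ = α2 * ∑' k, ∑' n, wE (-a') n * (wE (a' - a) k * (B (n - k)) ^ 2) := by
          congr 1
          rw [ENNReal.tsum_comm]
      _ = α2 * ∑' k, ∑' m, wE (-a') (m + k) * (wE (a' - a) k * (B m) ^ 2) := by
          congr 1
          apply tsum_congr; intro k
          rw [← tsum_shift_add (fun n => wE (-a') n * (wE (a' - a) k * (B (n - k)) ^ 2)) k]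
          apply tsum_congr; intro m
          simp [add_sub_cancel_right]
      _ = α2 * ∑' m, ∑' k, wE (-a') (m + k) * (wE (a' - a) k * (B m) ^ 2) := by
          congr 1
          rw [ENNReal.tsum_comm]
      _ = α2 * ∑' m, (B m) ^ 2 * ∑' k, wE (a' - a) k * wE (-a') (m + k) := by
          congr 1
          apply tsum_congr; intro m
          calc (∑' k, wE (-a') (m + k) * (wE (a' - a) k * (B m) ^ 2))
              = ∑' k, (B m) ^ 2 * (wE (a' - a) k * wE (-a') (m + k)) :=
                tsum_congr (fun k => by ring)
            _ = (B m) ^ 2 * ∑' k, wE (a' - a) k * wE (-a') (m + k) := ENNReal.tsum_mul_left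
      _ ≤ α2 * ∑' m, (B m) ^ 2 * (2 * K) := by
          gcongr with m
          calc (∑' k, wE (a' - a) k * wE (-a') (m + k))
              ≤ ∑' k, (wE (-a) k + wE (-a) (m + k)) := by
                apply ENNReal.tsum_le_tsum
                intro k
                have hkey := key2 (β := a - a') (γ := a') (by linarith) (by linarith) k (m + k)
                have hexp : a' - a = -(a - a') := by ring
                have hexp2 : -(a - a' + a') = -a := by ring
                rw [hexp]
                rw [hexp2] at hkey
                exact hkey
            _ = K + ∑' k, wE (-a) (m + k) := by rw [ENNReal.tsum_add]
            _ = 2 * K := by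
                have hsh : (∑' k, wE (-a) (m + k)) = ∑' k : ℤ, wE (-a) k := by
                  rw [show (fun k : ℤ => wE (-a) (m + k)) = (fun k : ℤ => wE (-a) (k + m))
                    from funext (fun k => by rw [add_comm])]
                  exact tsum_shift_add (fun j => wE (-a) j) m
                rw [hsh, ← hK]
                ring
      _ = 2 * K * α2 * β2 := by rw [ENNReal.tsum_mul_right]; ring
  -- combine
  calc (∑' n, wE (-a') n * (∑' k, F k * G (n - k)) ^ 2)
      ≤ ∑' n, e4 ^ 2 * (T1 n + T2 n) ^ 2 := ENNReal.tsum_le_tsum step1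
    _ ≤ ∑' n, e4 ^ 2 * (4 * ((T1 n) ^ 2 + (T2 n) ^ 2)) := by
        apply ENNReal.tsum_le_tsum
        intro n
        exact mul_le_mul_right (sq_add_le _ _) _
    _ = e4 ^ 2 * 4 * ((∑' n, (T1 n) ^ 2) + ∑' n, (T2 n) ^ 2) := by
        rw [← ENNReal.tsum_add, ← ENNReal.tsum_mul_left]
        apply tsum_congr; intro n
        ring
    _ ≤ e4 ^ 2 * 4 * (K * α2 * β2 + 2 * K * α2 * β2) :=
        mul_le_mul_right (add_le_add step3 step4) _
    _ = e4 ^ 2 * 12 * K * (α2 * β2) := by ring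
    _ = e4 ^ 2 * 12 * K * ((∑' k, wE a k * (F k) ^ 2) * (∑' m, wE (-a') m * (G m) ^ 2)) := by
        rw [hAsq, hBsq]

end ProdSobAux2

open MeasureTheory Function
open scoped ENNReal

/-- The `n`-th Fourier coefficient of a `2π`-periodic function `f : ℝ → ℂ`, with unitary
normalization: `f̂(n) = (2π)^(-1/2) ∫_0^{2π} f(x) e^{-inx} dx`. -/
noncomputable def fourierCoef (f : ℝ → ℂ) (n : ℤ) : ℂ :=
  (Real.sqrt (2 * Real.pi) : ℂ)⁻¹ *
    ∫ x in (0:ℝ)..(2 * Real.pi), f x * Complex.exp (-Complex.I * (n : ℂ) * (x : ℂ))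

/-- The Sobolev norm `‖f‖_{H^σ(𝕋)} = (∑_{n ∈ ℤ} (1+n²)^σ |f̂(n)|²)^{1/2}`, valued in `ℝ≥0∞`
so that it is meaningful (possibly infinite) for an arbitrary periodic function. -/
noncomputable def eSobNorm (σ : ℝ) (f : ℝ → ℂ) : ℝ≥0∞ :=
  (∑' n : ℤ, ENNReal.ofReal ((1 + (n : ℝ) ^ 2) ^ σ * ‖fourierCoef f n‖ ^ 2)) ^ (1/2 : ℝ)

noncomputable section FourierAux

lemma two_pi_pos : 0 < 2 * Real.pi := by positivity

lemma sqrt2pi_pos : 0 < Real.sqrt (2 * Real.pi) := Real.sqrt_pos.mpr two_pi_pos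

lemma sqrt2pi_ne : ((Real.sqrt (2 * Real.pi) : ℝ) : ℂ) ≠ 0 := by
  exact_mod_cast Complex.ofReal_ne_zero.mpr sqrt2pi_pos.ne'

lemma sqrt2pi_sq : ((Real.sqrt (2 * Real.pi) : ℝ) : ℂ) * ((Real.sqrt (2 * Real.pi) : ℝ) : ℂ)
    = ((2 * Real.pi : ℝ) : ℂ) := by
  rw [← Complex.ofReal_mul, Real.mul_self_sqrt two_pi_pos.le]

lemma norm_exp_neg_int (n : ℤ) (x : ℝ) : ‖Complex.exp (-Complex.I * (n:ℂ) * (x:ℂ))‖ = 1 := by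
  have h : -Complex.I * (n:ℂ) * (x:ℂ) = ((-((n:ℝ) * x) : ℝ) : ℂ) * Complex.I := by
    push_cast; ring
  rw [h, Complex.norm_exp_ofReal_mul_I]

lemma norm_exp_pos_int (k : ℤ) (x : ℝ) : ‖Complex.exp (Complex.I * (k:ℂ) * (x:ℂ))‖ = 1 := by
  have h : Complex.I * (k:ℂ) * (x:ℂ) = ((((k:ℝ) * x) : ℝ) : ℂ) * Complex.I := by
    push_cast; ring
  rw [h, Complex.norm_exp_ofReal_mul_I]

/-- Crude `L¹` bound on Fourier coefficients. -/
lemma norm_fourierCoef_le (g : ℝ → ℂ) (n : ℤ) :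
    ‖fourierCoef g n‖ ≤
      (Real.sqrt (2 * Real.pi))⁻¹ * ∫ x in (0:ℝ)..(2 * Real.pi), ‖g x‖ := by
  rw [fourierCoef, norm_mul]
  have h1 : ‖((Real.sqrt (2 * Real.pi) : ℝ) : ℂ)⁻¹‖ = (Real.sqrt (2 * Real.pi))⁻¹ := by
    rw [norm_inv, Complex.norm_real, Real.norm_eq_abs, abs_of_nonneg sqrt2pi_pos.le]
  rw [h1]
  apply mul_le_mul_of_nonneg_left _ (inv_nonneg.mpr sqrt2pi_pos.le)
  calc ‖∫ x in (0:ℝ)..(2 * Real.pi), g x * Complex.exp (-Complex.I * (n:ℂ) * (x:ℂ))‖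
      ≤ ∫ x in (0:ℝ)..(2 * Real.pi), ‖g x * Complex.exp (-Complex.I * (n:ℂ) * (x:ℂ))‖ :=
        intervalIntegral.norm_integral_le_integral_norm two_pi_pos.le
    _ = ∫ x in (0:ℝ)..(2 * Real.pi), ‖g x‖ := by
        apply intervalIntegral.integral_congr
        intro x _
        simp only []
        rw [norm_mul, norm_exp_neg_int, mul_one]

lemma integral_exp_int (m : ℤ) :
    ∫ x in (0:ℝ)..(2 * Real.pi), Complex.exp (Complex.I * (m:ℂ) * (x:ℂ)) =
      if m = 0 then ((2 * Real.pi : ℝ) : ℂ) else 0 := by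
  rcases eq_or_ne m 0 with rfl | hm
  · simp
  · rw [if_neg hm]
    have hc : (Complex.I * (m:ℂ)) ≠ 0 := by
      apply mul_ne_zero Complex.I_ne_zero
      exact_mod_cast hm
    have h := integral_exp_mul_complex (a := 0) (b := 2 * Real.pi) hc
    have he : ∀ x : ℝ, Complex.I * (m:ℂ) * (x:ℂ) = (Complex.I * (m:ℂ)) * (x:ℂ) := fun x => by ring
    rw [show (fun x : ℝ => Complex.exp (Complex.I * (m:ℂ) * (x:ℂ)))
        = (fun x : ℝ => Complex.exp ((Complex.I * (m:ℂ)) * (x:ℂ))) from rfl] at *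
    rw [h]
    have h2 : Complex.exp (Complex.I * (m:ℂ) * ((2 * Real.pi : ℝ) : ℂ)) = 1 := by
      have := Complex.exp_int_mul_two_pi_mul_I m
      rw [← this]
      congr 1
      push_cast
      ring
    have h0 : Complex.exp (Complex.I * (m:ℂ) * ((0:ℝ):ℂ)) = 1 := by
      norm_num
    rw [h2, h0]
    simp

end FourierAux

noncomputable section FourierAux2

/-- Exchange of sum and integral for an `ℓ¹` family of exponentials times an `L¹` function. -/
lemma integral_tsum_exp_mul {c : ℤ → ℂ} (hc : Summable fun k => ‖c k‖) {h : ℝ → ℂ}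
    (hh : IntervalIntegrable h volume 0 (2 * Real.pi)) :
    (∫ x in (0:ℝ)..(2 * Real.pi),
        (∑' k : ℤ, c k * Complex.exp (Complex.I * (k:ℂ) * (x:ℂ))) * h x)
      = ∑' k : ℤ, c k *
          ∫ x in (0:ℝ)..(2 * Real.pi), Complex.exp (Complex.I * (k:ℂ) * (x:ℂ)) * h x := by
  have hIoc : IntegrableOn h (Set.Ioc 0 (2 * Real.pi)) volume := hh.1
  rw [intervalIntegral.integral_of_le two_pi_pos.le]
  have hpt : ∀ x : ℝ, (∑' k : ℤ, c k * Complex.exp (Complex.I * (k:ℂ) * (x:ℂ))) * h x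
      = ∑' k : ℤ, c k * (Complex.exp (Complex.I * (k:ℂ) * (x:ℂ)) * h x) := by
    intro x
    rw [← tsum_mul_right]
    apply tsum_congr; intro k; ring
  rw [show (fun x : ℝ => (∑' k : ℤ, c k * Complex.exp (Complex.I * (k:ℂ) * (x:ℂ))) * h x)
      = (fun x : ℝ => ∑' k : ℤ, c k * (Complex.exp (Complex.I * (k:ℂ) * (x:ℂ)) * h x))
    from funext hpt]
  have hmeas : ∀ k : ℤ, AEStronglyMeasurable
      (fun x : ℝ => c k * (Complex.exp (Complex.I * (k:ℂ) * (x:ℂ)) * h x))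
      (volume.restrict (Set.Ioc 0 (2 * Real.pi))) := by
    intro k
    apply AEStronglyMeasurable.const_mul
    apply AEStronglyMeasurable.mul _ hIoc.aestronglyMeasurable
    apply Continuous.aestronglyMeasurable
    exact Complex.continuous_exp.comp (by continuity)
  have hlin : (∑' k : ℤ, ∫⁻ x in Set.Ioc 0 (2 * Real.pi),
      ‖c k * (Complex.exp (Complex.I * (k:ℂ) * (x:ℂ)) * h x)‖₊) ≠ ⊤ := by
    have hone : ∀ k : ℤ, ∀ x : ℝ,
        (‖c k * (Complex.exp (Complex.I * (k:ℂ) * (x:ℂ)) * h x)‖₊ : ℝ≥0∞)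
          = (‖c k‖₊ : ℝ≥0∞) * (‖h x‖₊ : ℝ≥0∞) := by
      intro k x
      rw [← ENNReal.coe_mul]
      congr 1
      ext
      push_cast
      rw [norm_mul, norm_mul, norm_exp_pos_int, one_mul]
    have heq : ∀ k : ℤ, (∫⁻ x in Set.Ioc 0 (2 * Real.pi),
        ‖c k * (Complex.exp (Complex.I * (k:ℂ) * (x:ℂ)) * h x)‖₊)
          = (‖c k‖₊ : ℝ≥0∞) * ∫⁻ x in Set.Ioc 0 (2 * Real.pi), ‖h x‖₊ := by
      intro k
      rw [← MeasureTheory.lintegral_const_mul' _ _ ENNReal.coe_ne_top]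
      apply MeasureTheory.lintegral_congr
      intro x
      exact hone k x
    rw [tsum_congr heq, ENNReal.tsum_mul_right]
    apply ENNReal.mul_ne_top
    · exact ENNReal.tsum_coe_ne_top_iff_summable.mpr (by
        rw [← NNReal.summable_coe]
        exact hc)
    · exact hIoc.2.ne
  rw [MeasureTheory.integral_tsum hmeas hlin]
  apply tsum_congr
  intro k
  rw [MeasureTheory.integral_const_mul, intervalIntegral.integral_of_le two_pi_pos.le]

/-- The Fourier coefficients of an `ℓ¹` exponential series. -/
lemma fourierCoef_series {c : ℤ → ℂ} (hc : Summable fun k => ‖c k‖) (n : ℤ) :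
    fourierCoef (fun x => ((Real.sqrt (2 * Real.pi) : ℝ) : ℂ)⁻¹ *
      ∑' k : ℤ, c k * Complex.exp (Complex.I * (k:ℂ) * (x:ℂ))) n = c n := by
  rw [fourierCoef]
  have hexp : IntervalIntegrable (fun x : ℝ => Complex.exp (-Complex.I * (n:ℂ) * (x:ℂ)))
      volume 0 (2 * Real.pi) :=
    (Complex.continuous_exp.comp (by continuity)).intervalIntegrable _ _
  have h1 : (∫ x in (0:ℝ)..(2 * Real.pi),
      (((Real.sqrt (2 * Real.pi) : ℝ) : ℂ)⁻¹ *
        ∑' k : ℤ, c k * Complex.exp (Complex.I * (k:ℂ) * (x:ℂ))) *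
          Complex.exp (-Complex.I * (n:ℂ) * (x:ℂ)))
      = ((Real.sqrt (2 * Real.pi) : ℝ) : ℂ)⁻¹ *
          ∫ x in (0:ℝ)..(2 * Real.pi),
            (∑' k : ℤ, c k * Complex.exp (Complex.I * (k:ℂ) * (x:ℂ))) *
              Complex.exp (-Complex.I * (n:ℂ) * (x:ℂ)) := by
    rw [← intervalIntegral.integral_const_mul]
    apply intervalIntegral.integral_congr
    intro x _
    ring
  rw [h1, integral_tsum_exp_mul hc hexp]
  have h2 : ∀ k : ℤ, (c k * ∫ x in (0:ℝ)..(2 * Real.pi),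
      Complex.exp (Complex.I * (k:ℂ) * (x:ℂ)) * Complex.exp (-Complex.I * (n:ℂ) * (x:ℂ)))
        = (if k = n then c n * ((2 * Real.pi : ℝ) : ℂ) else 0) := by
    intro k
    have hprod : ∀ x : ℝ, Complex.exp (Complex.I * (k:ℂ) * (x:ℂ)) *
        Complex.exp (-Complex.I * (n:ℂ) * (x:ℂ))
          = Complex.exp (Complex.I * ((k - n : ℤ):ℂ) * (x:ℂ)) := by
      intro x
      rw [← Complex.exp_add]
      congr 1
      push_cast
      ring
    rw [intervalIntegral.integral_congr (fun x _ => hprod x), integral_exp_int (k - n)]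
    rcases eq_or_ne k n with rfl | hk
    · simp
    · rw [if_neg (sub_ne_zero.mpr hk), if_neg hk, mul_zero]
  rw [tsum_congr h2, tsum_ite_eq n (fun _ => c n * ((2 * Real.pi : ℝ) : ℂ))]
  have hz := sqrt2pi_ne
  set z : ℂ := ((Real.sqrt (2 * Real.pi) : ℝ) : ℂ) with hzdef
  rw [show ((2 * Real.pi : ℝ) : ℂ) = z * z from sqrt2pi_sq.symm]
  field_simp

/-- Fourier coefficients of the product of an `ℓ¹` exponential series with an `L¹` function. -/
lemma fourierCoef_series_mul {c : ℤ → ℂ} (hc : Summable fun k => ‖c k‖) {g : ℝ → ℂ}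
    (hg : IntervalIntegrable g volume 0 (2 * Real.pi)) (n : ℤ) :
    fourierCoef (fun x => (((Real.sqrt (2 * Real.pi) : ℝ) : ℂ)⁻¹ *
      ∑' k : ℤ, c k * Complex.exp (Complex.I * (k:ℂ) * (x:ℂ))) * g x) n
      = ((Real.sqrt (2 * Real.pi) : ℝ) : ℂ)⁻¹ * ∑' k : ℤ, c k * fourierCoef g (n - k) := by
  rw [fourierCoef]
  have hge : IntervalIntegrable (fun x : ℝ => g x * Complex.exp (-Complex.I * (n:ℂ) * (x:ℂ)))
      volume 0 (2 * Real.pi) :=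
    hg.mul_continuousOn (Continuous.continuousOn
      (Complex.continuous_exp.comp (by continuity)))
  have h1 : (∫ x in (0:ℝ)..(2 * Real.pi),
      ((((Real.sqrt (2 * Real.pi) : ℝ) : ℂ)⁻¹ *
        ∑' k : ℤ, c k * Complex.exp (Complex.I * (k:ℂ) * (x:ℂ))) * g x) *
          Complex.exp (-Complex.I * (n:ℂ) * (x:ℂ)))
      = ((Real.sqrt (2 * Real.pi) : ℝ) : ℂ)⁻¹ *
          ∫ x in (0:ℝ)..(2 * Real.pi),
            (∑' k : ℤ, c k * Complex.exp (Complex.I * (k:ℂ) * (x:ℂ))) *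
              (g x * Complex.exp (-Complex.I * (n:ℂ) * (x:ℂ))) := by
    rw [← intervalIntegral.integral_const_mul]
    apply intervalIntegral.integral_congr
    intro x _
    ring
  rw [h1, integral_tsum_exp_mul hc hge]
  have h2 : ∀ k : ℤ, (c k * ∫ x in (0:ℝ)..(2 * Real.pi),
      Complex.exp (Complex.I * (k:ℂ) * (x:ℂ)) *
        (g x * Complex.exp (-Complex.I * (n:ℂ) * (x:ℂ))))
      = c k * (((Real.sqrt (2 * Real.pi) : ℝ) : ℂ) * fourierCoef g (n - k)) := by
    intro k
    congr 1
    have hprod : ∀ x : ℝ, Complex.exp (Complex.I * (k:ℂ) * (x:ℂ)) *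
        (g x * Complex.exp (-Complex.I * (n:ℂ) * (x:ℂ)))
          = g x * Complex.exp (-Complex.I * ((n - k : ℤ):ℂ) * (x:ℂ)) := by
      intro x
      rw [mul_comm, mul_assoc, ← Complex.exp_add]
      congr 2
      push_cast
      ring
    rw [intervalIntegral.integral_congr (fun x _ => hprod x)]
    rw [fourierCoef, ← mul_assoc, mul_inv_cancel₀ sqrt2pi_ne, one_mul]
  rw [tsum_congr h2]
  have hz := sqrt2pi_ne
  set z : ℂ := ((Real.sqrt (2 * Real.pi) : ℝ) : ℂ) with hzdef
  have h3 : (∑' k : ℤ, c k * (z * fourierCoef g (n - k)))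
      = z * ∑' k : ℤ, c k * fourierCoef g (n - k) := by
    rw [← tsum_mul_left]
    exact tsum_congr fun k => by ring
  rw [h3, ← mul_assoc z⁻¹ z, inv_mul_cancel₀ hz, one_mul]

end FourierAux2

noncomputable section Uniqueness

open scoped Real NNReal

/-- A circle function integrating to zero against every Fourier monomial vanishes a.e. -/
lemma ae_zero_of_fourier_integrals_zero {T : ℝ} [hT : Fact (0 < T)]
    {H : AddCircle T → ℂ} (hint : Integrable H volume)
    (hzero : ∀ n : ℤ, ∫ x : AddCircle T, fourier n x * H x = 0) :
    H =ᵐ[(volume : Measure (AddCircle T))] 0 := by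
  -- Step 1: the integral against every continuous function vanishes.
  have hφint : ∀ φ : C(AddCircle T, ℂ), Integrable (fun x => φ x * H x) volume := by
    intro φ
    exact hint.bdd_mul φ.continuous.aestronglyMeasurable
      (Filter.Eventually.of_forall fun x => φ.norm_coe_le_norm x)
  set L₀ : C(AddCircle T, ℂ) →ₗ[ℂ] ℂ :=
    { toFun := fun φ => ∫ x : AddCircle T, φ x * H x
      map_add' := by
        intro φ ψ
        simp only [ContinuousMap.add_apply]
        rw [← integral_add (hφint φ) (hφint ψ)]
        apply integral_congr_ae
        filter_upwards with x
        ring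
      map_smul' := by
        intro c φ
        simp only [ContinuousMap.smul_apply, RingHom.id_apply, smul_eq_mul]
        rw [← integral_const_mul]
        apply integral_congr_ae
        filter_upwards with x
        ring } with hL₀
  have hbound : ∀ φ : C(AddCircle T, ℂ), ‖L₀ φ‖ ≤ (∫ x : AddCircle T, ‖H x‖) * ‖φ‖ := by
    intro φ
    calc ‖∫ x : AddCircle T, φ x * H x‖ ≤ ∫ x : AddCircle T, ‖φ x * H x‖ :=
          norm_integral_le_integral_norm _
      _ ≤ ∫ x : AddCircle T, ‖φ‖ * ‖H x‖ := by
          apply integral_mono (hφint φ).norm (hint.norm.const_mul _)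
          intro x
          dsimp only
          rw [norm_mul]
          exact mul_le_mul_of_nonneg_right (φ.norm_coe_le_norm x) (norm_nonneg _)
      _ = (∫ x : AddCircle T, ‖H x‖) * ‖φ‖ := by rw [integral_const_mul]; ring
  set L : C(AddCircle T, ℂ) →L[ℂ] ℂ := L₀.mkContinuous _ hbound with hL
  have hker : (Submodule.span ℂ (Set.range (fourier (T := T)))).topologicalClosure ≤
      LinearMap.ker (L : C(AddCircle T, ℂ) →ₗ[ℂ] ℂ) := by
    apply Submodule.topologicalClosure_minimal
    · rw [Submodule.span_le]
      rintro _ ⟨n, rfl⟩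
      exact hzero n
    · exact ContinuousLinearMap.isClosed_ker L
  have hcont : ∀ φ : C(AddCircle T, ℂ), ∫ x : AddCircle T, φ x * H x = 0 := by
    intro φ
    have : φ ∈ LinearMap.ker (L : C(AddCircle T, ℂ) →ₗ[ℂ] ℂ) := hker (by rw [span_fourier_closure_eq_top]; trivial)
    exact this
  -- Step 2: integrals over closed sets vanish.
  apply ae_eq_zero_of_forall_setIntegral_isClosed_eq_zero hint
  intro s hs
  set δ : ℕ → ℝ := fun j => 1/(j+1) with hδ
  have δpos : ∀ j : ℕ, 0 < δ j := fun j => by positivity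
  have δlim : Filter.Tendsto δ Filter.atTop (nhds 0) :=
    tendsto_one_div_add_atTop_nhds_zero_nat
  have key := thickenedIndicator_tendsto_indicator_closure δpos δlim s
  rw [tendsto_pi_nhds] at key
  set F : ℕ → AddCircle T → ℂ :=
    fun j x => ((thickenedIndicator (δpos j) s x : ℝ) : ℂ) * H x with hF
  have hFcont : ∀ j, Continuous (fun x : AddCircle T =>
      ((thickenedIndicator (δpos j) s x : ℝ) : ℂ)) := by
    intro j
    exact Complex.continuous_ofReal.comp
      (NNReal.continuous_coe.comp (thickenedIndicator (δpos j) s).continuous)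
  have hFzero : ∀ j, ∫ x : AddCircle T, F j x = 0 := by
    intro j
    exact hcont ⟨_, hFcont j⟩
  have hDCT : Filter.Tendsto (fun j => ∫ x : AddCircle T, F j x) Filter.atTop
      (nhds (∫ x : AddCircle T, (Set.indicator (closure s) (fun _ => (1:ℝ≥0)) x : ℝ) * H x)) := by
    apply tendsto_integral_of_dominated_convergence (fun x => ‖H x‖)
    · intro j
      exact ((hFcont j).aestronglyMeasurable.mul hint.aestronglyMeasurable)
    · exact hint.norm
    · intro j
      filter_upwards with x
      rw [hF]
      simp only []
      rw [norm_mul]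
      have h1 : ‖((thickenedIndicator (δpos j) s x : ℝ) : ℂ)‖ ≤ 1 := by
        rw [Complex.norm_real, Real.norm_eq_abs, abs_of_nonneg (by positivity)]
        exact_mod_cast thickenedIndicator_le_one (δpos j) s x
      calc ‖((thickenedIndicator (δpos j) s x : ℝ) : ℂ)‖ * ‖H x‖
          ≤ 1 * ‖H x‖ := mul_le_mul_of_nonneg_right h1 (norm_nonneg _)
        _ = ‖H x‖ := one_mul _
    · filter_upwards with x
      apply Filter.Tendsto.mul_const
      have h3 := (NNReal.continuous_coe.tendsto _).comp (key x)
      have h4 := (Complex.continuous_ofReal.tendsto _).comp h3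
      rw [NNReal.coe_indicator] at h4
      exact h4
  have hlim0 : (∫ x : AddCircle T, (Set.indicator (closure s) (fun _ => (1:ℝ≥0)) x : ℝ) * H x)
      = 0 := by
    have h2 : Filter.Tendsto (fun _ : ℕ => (0:ℂ)) Filter.atTop (nhds 0) := tendsto_const_nhds
    have := hDCT.congr (fun j => (hFzero j))
    exact tendsto_nhds_unique this h2
  rw [← hlim0]
  rw [hs.closure_eq]
  rw [← integral_indicator hs.measurableSet]
  apply integral_congr_ae
  filter_upwards with x
  by_cases hx : x ∈ s
  · simp [Set.indicator_of_mem hx]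
  · simp [Set.indicator_of_notMem hx]

end Uniqueness

noncomputable section Transfer

open scoped Real

/-- If all Fourier coefficients of an integrable function vanish, the function vanishes a.e. -/
lemma ae_zero_of_fourierCoef_zero {h : ℝ → ℂ}
    (hi : IntervalIntegrable h volume 0 (2 * Real.pi))
    (hz : ∀ n : ℤ, fourierCoef h n = 0) :
    h =ᵐ[volume.restrict (Set.Ioc 0 (2 * Real.pi))] 0 := by
  haveI : Fact (0 < 2 * Real.pi) := ⟨two_pi_pos⟩
  have hIoc : IntegrableOn h (Set.Ioc 0 (2 * Real.pi)) volume := hi.1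
  set hm := hIoc.aestronglyMeasurable with hhm
  set h' : ℝ → ℂ := hm.mk h with hh'
  have hmeas' : StronglyMeasurable h' := hm.stronglyMeasurable_mk
  have haeq : h =ᵐ[volume.restrict (Set.Ioc 0 (2 * Real.pi))] h' := hm.ae_eq_mk
  set H : AddCircle (2 * Real.pi) → ℂ := AddCircle.liftIoc (2 * Real.pi) 0 h' with hH
  have hHm : StronglyMeasurable H := by
    apply hmeas'.comp_measurable
    exact measurable_subtype_coe.comp (AddCircle.measurableEquivIoc (2 * Real.pi) 0).measurable
  have hcoe : ∀ x : ℝ, x ∈ Set.Ioc (0:ℝ) (0 + 2 * Real.pi) → H ((x : ℝ) : AddCircle (2 * Real.pi)) = h' x := by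
    intro x hx
    exact AddCircle.liftIoc_coe_apply hx
  have hIoc' : IntegrableOn h' (Set.Ioc 0 (2 * Real.pi)) volume := hIoc.congr_fun_ae haeq
  have hHint : Integrable H volume := by
    rw [← (AddCircle.measurePreserving_mk (2 * Real.pi) 0).integrable_comp
      hHm.aestronglyMeasurable]
    have hae : (H ∘ (fun x : ℝ => (x : AddCircle (2 * Real.pi))))
        =ᵐ[volume.restrict (Set.Ioc 0 (0 + 2 * Real.pi))] h' := by
      filter_upwards [ae_restrict_mem measurableSet_Ioc] with x hx
      exact hcoe x hx
    apply Integrable.congr _ hae.symm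
    rw [zero_add]
    exact hIoc'
  have hker : ∀ n : ℤ, ∫ z : AddCircle (2 * Real.pi), fourier n z * H z = 0 := by
    intro n
    have hpre := AddCircle.intervalIntegral_preimage (2 * Real.pi) 0
      (fun z : AddCircle (2 * Real.pi) => fourier n z * H z)
    rw [← hpre, zero_add]
    have hcongr : ∫ x in (0:ℝ)..(2 * Real.pi),
        fourier n ((x : ℝ) : AddCircle (2 * Real.pi)) * H ((x : ℝ) : AddCircle (2 * Real.pi))
        = ∫ x in (0:ℝ)..(2 * Real.pi), h x * Complex.exp (-Complex.I * ((-n : ℤ) : ℂ) * (x : ℂ)) := by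
      apply intervalIntegral.integral_congr_ae
      have haeq' : ∀ᵐ x ∂(volume : Measure ℝ), x ∈ Set.Ioc (0:ℝ) (2 * Real.pi) → h x = h' x :=
        (ae_restrict_iff' measurableSet_Ioc).mp haeq
      filter_upwards [haeq'] with x hhx'
      intro hxI
      rw [Set.uIoc_of_le two_pi_pos.le] at hxI
      have hhx := hhx' hxI
      have h1 : H ((x : ℝ) : AddCircle (2 * Real.pi)) = h' x := by
        apply hcoe
        rwa [zero_add]
      have h2 : (fourier n ((x : ℝ) : AddCircle (2 * Real.pi)) : ℂ)
          = Complex.exp (-Complex.I * ((-n : ℤ) : ℂ) * (x : ℂ)) := by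
        rw [fourier_coe_apply]
        congr 1
        have hpi : ((2 * Real.pi : ℝ) : ℂ) ≠ 0 := by
          exact_mod_cast Complex.ofReal_ne_zero.mpr two_pi_pos.ne'
        have hpi2 : ((Real.pi : ℝ) : ℂ) ≠ 0 := Complex.ofReal_ne_zero.mpr Real.pi_ne_zero
        push_cast
        field_simp
      rw [h1, h2, ← hhx]
      ring
    rw [hcongr]
    have := hz (-n)
    rw [fourierCoef] at this
    rcases mul_eq_zero.mp this with hbad | hgood
    · exact absurd hbad (inv_ne_zero sqrt2pi_ne)
    · exact hgood
  have hH0 : H =ᵐ[(volume : Measure (AddCircle (2 * Real.pi)))] 0 :=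
    ae_zero_of_fourier_integrals_zero hHint hker
  -- pull back to the interval
  have hNmeas : MeasurableSet {z : AddCircle (2 * Real.pi) | H z ≠ 0} :=
    (hHm.measurable (measurableSet_singleton 0)).compl
  have hN0 : (volume : Measure (AddCircle (2 * Real.pi))) {z | H z ≠ 0} = 0 := by
    have := hH0
    rw [Filter.EventuallyEq, MeasureTheory.ae_iff] at this
    simpa using this
  have hpre0 : (volume.restrict (Set.Ioc (0:ℝ) (0 + 2 * Real.pi)))
      ((fun x : ℝ => (x : AddCircle (2 * Real.pi))) ⁻¹' {z | H z ≠ 0}) = 0 := by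
    rw [(AddCircle.measurePreserving_mk (2 * Real.pi) 0).measure_preimage
      hNmeas.nullMeasurableSet]
    exact hN0
  have hsub : {x : ℝ | h' x ≠ 0} ∩ Set.Ioc 0 (0 + 2 * Real.pi) ⊆
      (fun x : ℝ => (x : AddCircle (2 * Real.pi))) ⁻¹' {z | H z ≠ 0} := by
    rintro x ⟨hx1, hx2⟩
    have := hcoe x hx2
    simp only [Set.mem_preimage, Set.mem_setOf_eq]
    rw [this]
    exact hx1
  have hh'0 : h' =ᵐ[volume.restrict (Set.Ioc 0 (2 * Real.pi))] 0 := by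
    rw [Filter.EventuallyEq, MeasureTheory.ae_iff]
    have hle : volume.restrict (Set.Ioc (0:ℝ) (2 * Real.pi)) {x | ¬ h' x = (0:ℝ→ℂ) x} ≤
        (volume.restrict (Set.Ioc (0:ℝ) (0 + 2 * Real.pi)))
          ((fun x : ℝ => (x : AddCircle (2 * Real.pi))) ⁻¹' {z | H z ≠ 0}) := by
      rw [Measure.restrict_apply₀']
      · rw [zero_add]
        rw [Measure.restrict_apply₀']
        · apply measure_mono
          rintro x ⟨hx1, hx2⟩
          refine ⟨hsub ⟨?_, ?_⟩, hx2⟩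
          · simpa using hx1
          · rw [zero_add]
            exact hx2
        · exact measurableSet_Ioc.nullMeasurableSet
      · exact measurableSet_Ioc.nullMeasurableSet
    exact le_antisymm (hle.trans (le_of_eq hpre0)) zero_le
  exact haeq.trans hh'0

end Transfer

noncomputable section Assembly

lemma eSobNorm_eq (σ : ℝ) (f : ℝ → ℂ) :
    eSobNorm σ f
      = (∑' n : ℤ, wE σ n * (ENNReal.ofReal ‖fourierCoef f n‖) ^ 2) ^ (1/2 : ℝ) := by
  rw [eSobNorm]
  congr 1
  apply tsum_congr
  intro n
  rw [wE, ← ENNReal.ofReal_pow (norm_nonneg _), ← ENNReal.ofReal_mul (by positivity)]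

lemma fourierCoef_congr_ae {u v : ℝ → ℂ}
    (h : u =ᵐ[volume.restrict (Set.Ioc 0 (2 * Real.pi))] v) (n : ℤ) :
    fourierCoef u n = fourierCoef v n := by
  rw [fourierCoef, fourierCoef]
  congr 1
  apply intervalIntegral.integral_congr_ae
  have h' : ∀ᵐ x ∂(volume : Measure ℝ), x ∈ Set.Ioc (0:ℝ) (2 * Real.pi) → u x = v x :=
    (ae_restrict_iff' measurableSet_Ioc).mp h
  filter_upwards [h'] with x hx
  intro hxI
  rw [Set.uIoc_of_le two_pi_pos.le] at hxI
  rw [hx hxI]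

lemma fourierCoef_sub {u v : ℝ → ℂ} (hu : IntervalIntegrable u volume 0 (2 * Real.pi))
    (hv : IntervalIntegrable v volume 0 (2 * Real.pi)) (n : ℤ) :
    fourierCoef (fun x => u x - v x) n = fourierCoef u n - fourierCoef v n := by
  rw [fourierCoef, fourierCoef, fourierCoef, ← mul_sub]
  congr 1
  have hcont : ContinuousOn (fun x : ℝ => Complex.exp (-Complex.I * (n:ℂ) * (x:ℂ)))
      (Set.uIcc 0 (2 * Real.pi)) :=
    Continuous.continuousOn (Complex.continuous_exp.comp (by continuity))
  rw [← intervalIntegral.integral_sub (hu.mul_continuousOn hcont) (hv.mul_continuousOn hcont)]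
  apply intervalIntegral.integral_congr
  intro x _
  dsimp only
  ring

lemma eSobNorm_zero_of_coef_zero {σ : ℝ} {u : ℝ → ℂ}
    (h : ∀ n : ℤ, fourierCoef u n = 0) : eSobNorm σ u = 0 := by
  rw [eSobNorm_eq]
  have : ∀ n : ℤ, wE σ n * (ENNReal.ofReal ‖fourierCoef u n‖) ^ 2 = 0 := by
    intro n
    rw [h n]
    simp
  rw [tsum_congr this, tsum_zero]
  exact ENNReal.zero_rpow_of_pos (by norm_num)

lemma summable_of_wtsum_fin {a : ℝ} (ha : 1/2 < a) {c : ℤ → ℂ}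
    (hfin : (∑' n : ℤ, wE a n * (ENNReal.ofReal ‖c n‖) ^ 2) ≠ ∞) :
    Summable (fun n : ℤ => ‖c n‖) := by
  set K : ℝ≥0∞ := ∑' j : ℤ, wE (-a) j with hK
  have hKfin : K ≠ ∞ := by
    have heq : K = ENNReal.ofReal (∑' j : ℤ, (1 + (j:ℝ)^2) ^ (-a)) := by
      rw [hK, ENNReal.ofReal_tsum_of_nonneg (fun j => Real.rpow_nonneg (wbase_pos j).le _)
        (summable_wR ha)]
      rfl
    rw [heq]
    exact ENNReal.ofReal_ne_top
  have hsq : (∑' n : ℤ, ENNReal.ofReal ‖c n‖) ^ 2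
      ≤ K * ∑' n : ℤ, wE a n * (ENNReal.ofReal ‖c n‖) ^ 2 := by
    have hdec : ∀ n : ℤ, ENNReal.ofReal ‖c n‖
        = wE (-a/2) n * (wE (a/2) n * ENNReal.ofReal ‖c n‖) := by
      intro n
      rw [← mul_assoc, wE_mul, show -a/2 + a/2 = (0:ℝ) by ring, wE_zero, one_mul]
    calc (∑' n : ℤ, ENNReal.ofReal ‖c n‖) ^ 2
        = (∑' n : ℤ, wE (-a/2) n * (wE (a/2) n * ENNReal.ofReal ‖c n‖)) ^ 2 := by
          rw [tsum_congr hdec]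
      _ ≤ (∑' n : ℤ, (wE (-a/2) n) ^ 2) * (∑' n : ℤ, (wE (a/2) n * ENNReal.ofReal ‖c n‖) ^ 2) :=
          enn_cs _ _
      _ = K * ∑' n : ℤ, wE a n * (ENNReal.ofReal ‖c n‖) ^ 2 := by
          congr 1
          · apply tsum_congr; intro n; rw [wE_sq]; ring_nf
          · apply tsum_congr; intro n; rw [mul_pow, wE_sq]; ring_nf
  have hfin2 : (∑' n : ℤ, ENNReal.ofReal ‖c n‖) ≠ ∞ := by
    intro habs
    rw [habs] at hsq
    have : (⊤ : ℝ≥0∞) ^ 2 = ⊤ := by simp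
    rw [this] at hsq
    exact (ENNReal.mul_ne_top hKfin hfin) (top_le_iff.mp hsq)
  have hco : (∑' n : ℤ, (‖c n‖₊ : ℝ≥0∞)) ≠ ∞ := by
    have he : ∀ n : ℤ, (‖c n‖₊ : ℝ≥0∞) = ENNReal.ofReal ‖c n‖ :=
      fun n => (ofReal_norm _).symm
    rw [tsum_congr he]
    exact hfin2
  have hs := ENNReal.tsum_coe_ne_top_iff_summable.mp hco
  have hs2 := NNReal.summable_coe.mpr hs
  simpa [coe_nnnorm] using hs2

end Assembly

noncomputable section Assembly2

lemma K_fin {a : ℝ} (ha : 1/2 < a) : (∑' j : ℤ, wE (-a) j) ≠ ∞ := by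
  have heq : (∑' j : ℤ, wE (-a) j) = ENNReal.ofReal (∑' j : ℤ, (1 + (j:ℝ)^2) ^ (-a)) := by
    rw [ENNReal.ofReal_tsum_of_nonneg (fun j => Real.rpow_nonneg (wbase_pos j).le _)
      (summable_wR ha)]
    rfl
  rw [heq]
  exact ENNReal.ofReal_ne_top

lemma coef_product_bound {f g : ℝ → ℂ}
    (hfi : IntervalIntegrable f volume 0 (2 * Real.pi))
    (hgi : IntervalIntegrable g volume 0 (2 * Real.pi))
    (hsum : Summable (fun k : ℤ => ‖fourierCoef f k‖)) (n : ℤ) :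
    ENNReal.ofReal ‖fourierCoef (fun x => f x * g x) n‖
      ≤ ENNReal.ofReal ((Real.sqrt (2 * Real.pi))⁻¹) *
        ∑' k : ℤ, ENNReal.ofReal ‖fourierCoef f k‖ * ENNReal.ofReal ‖fourierCoef g (n - k)‖ := by
  set c : ℤ → ℂ := fourierCoef f with hc
  have hcont_sum : Continuous (fun x : ℝ => ∑' k : ℤ, c k * Complex.exp (Complex.I * (k:ℂ) * (x:ℂ))) := by
    apply continuous_tsum (u := fun k : ℤ => ‖c k‖)
    · intro i
      exact continuous_const.mul (Complex.continuous_exp.comp (by continuity))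
    · exact hsum
    · intro k x
      rw [norm_mul, norm_exp_pos_int, mul_one]
  set f0 : ℝ → ℂ := fun x => ((Real.sqrt (2 * Real.pi) : ℝ) : ℂ)⁻¹ *
    ∑' k : ℤ, c k * Complex.exp (Complex.I * (k:ℂ) * (x:ℂ)) with hf0
  have hf0cont : Continuous f0 := continuous_const.mul hcont_sum
  have hf0int : IntervalIntegrable f0 volume 0 (2 * Real.pi) :=
    hf0cont.intervalIntegrable _ _
  have hdiffcoef : ∀ m : ℤ, fourierCoef (fun x => f x - f0 x) m = 0 := by
    intro m
    rw [fourierCoef_sub hfi hf0int m]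
    have := fourierCoef_series hsum m
    rw [hf0, ← hc]
    rw [show (fun x : ℝ => ((Real.sqrt (2 * Real.pi) : ℝ) : ℂ)⁻¹ *
      ∑' k : ℤ, c k * Complex.exp (Complex.I * (k:ℂ) * (x:ℂ)))
      = (fun x : ℝ => ((Real.sqrt (2 * Real.pi) : ℝ) : ℂ)⁻¹ *
      ∑' k : ℤ, c k * Complex.exp (Complex.I * (k:ℂ) * (x:ℂ))) from rfl]
    rw [this]
    exact sub_self _
  have hae := ae_zero_of_fourierCoef_zero (hfi.sub hf0int) hdiffcoef
  have hprod : (fun x => f x * g x) =ᵐ[volume.restrict (Set.Ioc 0 (2 * Real.pi))]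
      (fun x => f0 x * g x) := by
    filter_upwards [hae] with x hx
    have : f x - f0 x = 0 := hx
    have hfx : f x = f0 x := by linear_combination this
    rw [hfx]
  have hcoef_eq : fourierCoef (fun x => f x * g x) n = fourierCoef (fun x => f0 x * g x) n :=
    fourierCoef_congr_ae hprod n
  have hser : fourierCoef (fun x => f0 x * g x) n
      = ((Real.sqrt (2 * Real.pi) : ℝ) : ℂ)⁻¹ * ∑' k : ℤ, c k * fourierCoef g (n - k) :=
    fourierCoef_series_mul hsum hgi n
  rw [hcoef_eq, hser]
  -- summability of the coefficient products
  set Mg : ℝ := (Real.sqrt (2 * Real.pi))⁻¹ * ∫ x in (0:ℝ)..(2 * Real.pi), ‖g x‖ with hMg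
  have hMg0 : 0 ≤ Mg := by
    rw [hMg]
    apply mul_nonneg (inv_nonneg.mpr sqrt2pi_pos.le)
    apply intervalIntegral.integral_nonneg two_pi_pos.le
    intro x _
    exact norm_nonneg _
  have hbd : ∀ k : ℤ, ‖c k‖ * ‖fourierCoef g (n - k)‖ ≤ ‖c k‖ * Mg := by
    intro k
    exact mul_le_mul_of_nonneg_left (norm_fourierCoef_le g (n - k)) (norm_nonneg _)
  have hsum2 : Summable (fun k : ℤ => ‖c k‖ * ‖fourierCoef g (n - k)‖) :=
    Summable.of_nonneg_of_le (fun k => by positivity) hbd (hsum.mul_right Mg)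
  have hsum3 : Summable (fun k : ℤ => ‖c k * fourierCoef g (n - k)‖) := by
    apply hsum2.congr
    intro k
    rw [norm_mul]
  have hnorm : ‖((Real.sqrt (2 * Real.pi) : ℝ) : ℂ)⁻¹ * ∑' k : ℤ, c k * fourierCoef g (n - k)‖
      ≤ (Real.sqrt (2 * Real.pi))⁻¹ * ∑' k : ℤ, ‖c k‖ * ‖fourierCoef g (n - k)‖ := by
    rw [norm_mul]
    have h1 : ‖((Real.sqrt (2 * Real.pi) : ℝ) : ℂ)⁻¹‖ = (Real.sqrt (2 * Real.pi))⁻¹ := by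
      rw [norm_inv, Complex.norm_real, Real.norm_eq_abs, abs_of_nonneg sqrt2pi_pos.le]
    rw [h1]
    apply mul_le_mul_of_nonneg_left _ (inv_nonneg.mpr sqrt2pi_pos.le)
    calc ‖∑' k : ℤ, c k * fourierCoef g (n - k)‖
        ≤ ∑' k : ℤ, ‖c k * fourierCoef g (n - k)‖ := norm_tsum_le_tsum_norm hsum3
      _ = ∑' k : ℤ, ‖c k‖ * ‖fourierCoef g (n - k)‖ := tsum_congr (fun k => norm_mul _ _)
  calc ENNReal.ofReal ‖((Real.sqrt (2 * Real.pi) : ℝ) : ℂ)⁻¹ *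
        ∑' k : ℤ, c k * fourierCoef g (n - k)‖
      ≤ ENNReal.ofReal ((Real.sqrt (2 * Real.pi))⁻¹ *
          ∑' k : ℤ, ‖c k‖ * ‖fourierCoef g (n - k)‖) := ENNReal.ofReal_le_ofReal hnorm
    _ = ENNReal.ofReal ((Real.sqrt (2 * Real.pi))⁻¹) *
          ENNReal.ofReal (∑' k : ℤ, ‖c k‖ * ‖fourierCoef g (n - k)‖) := by
        rw [ENNReal.ofReal_mul (inv_nonneg.mpr sqrt2pi_pos.le)]
    _ = ENNReal.ofReal ((Real.sqrt (2 * Real.pi))⁻¹) *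
          ∑' k : ℤ, ENNReal.ofReal ‖fourierCoef f k‖ * ENNReal.ofReal ‖fourierCoef g (n - k)‖ := by
        congr 1
        rw [ENNReal.ofReal_tsum_of_nonneg (fun k => by positivity) hsum2]
        apply tsum_congr
        intro k
        rw [ENNReal.ofReal_mul (norm_nonneg _), hc]

end Assembly2

/-- For `s > 3/2`, `r ≤ 1/2`, `s + r ≥ 2`, there is `C = C(s,r) > 0` such that
for all `2π`-periodic functions `f, g` on the circle,
`‖fg‖_{H^{r-1}(𝕋)} ≤ C ‖f‖_{H^{s-1}(𝕋)} ‖g‖_{H^{r-1}(𝕋)}`. -/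
theorem product_sobolev_estimate_circle_low (s r : ℝ) (hs : 3/2 < s) (hr : r ≤ 1/2)
    (hsr : 2 ≤ s + r) :
    ∃ C : ℝ, 0 < C ∧ ∀ f g : ℝ → ℂ,
      Function.Periodic f (2 * Real.pi) → Function.Periodic g (2 * Real.pi) →
      IntervalIntegrable f volume 0 (2 * Real.pi) →
      IntervalIntegrable g volume 0 (2 * Real.pi) →
      eSobNorm (r - 1) (fun x => f x * g x) ≤
        ENNReal.ofReal C * eSobNorm (s - 1) f * eSobNorm (r - 1) g := by
  have ha : 1/2 < s - 1 := by linarith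
  have h1 : 1/2 ≤ 1 - r := by linarith
  have h2 : 1 - r ≤ s - 1 := by linarith
  set K : ℝ≥0∞ := ∑' j : ℤ, wE (-(s-1)) j with hK
  have hKfin : K ≠ ∞ := K_fin ha
  set c2 : ℝ≥0∞ := ENNReal.ofReal ((Real.sqrt (2 * Real.pi))⁻¹) with hc2
  set CE : ℝ≥0∞ := (ENNReal.ofReal (4 ^ ((1-r)/2))) ^ 2 * 12 * K with hCE
  have hCEfin : CE ≠ ∞ := by
    apply ENNReal.mul_ne_top _ hKfin
    apply ENNReal.mul_ne_top _ (by norm_num)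
    exact ENNReal.pow_ne_top ENNReal.ofReal_ne_top
  set Ctot : ℝ≥0∞ := (c2 ^ 2 * CE) ^ (1/2 : ℝ) with hCtot
  have hCtotfin : Ctot ≠ ∞ := by
    apply ENNReal.rpow_ne_top_of_nonneg (by norm_num)
    exact ENNReal.mul_ne_top (ENNReal.pow_ne_top ENNReal.ofReal_ne_top) hCEfin
  refine ⟨Ctot.toReal + 1, by positivity, ?_⟩
  intro f g _hpf _hpg hfi hgi
  have hCle : Ctot ≤ ENNReal.ofReal (Ctot.toReal + 1) := by
    calc Ctot = ENNReal.ofReal Ctot.toReal := (ENNReal.ofReal_toReal hCtotfin).symm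
      _ ≤ ENNReal.ofReal (Ctot.toReal + 1) := ENNReal.ofReal_le_ofReal (by linarith)
  have hCne : ENNReal.ofReal (Ctot.toReal + 1) ≠ 0 := by
    apply ne_of_gt
    apply ENNReal.ofReal_pos.mpr
    positivity
  set TF : ℝ≥0∞ := ∑' n : ℤ, wE (s-1) n * (ENNReal.ofReal ‖fourierCoef f n‖) ^ 2 with hTF
  set TG : ℝ≥0∞ := ∑' m : ℤ, wE (r-1) m * (ENNReal.ofReal ‖fourierCoef g m‖) ^ 2 with hTG
  have hESf : eSobNorm (s-1) f = TF ^ (1/2 : ℝ) := eSobNorm_eq _ _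
  have hESg : eSobNorm (r-1) g = TG ^ (1/2 : ℝ) := eSobNorm_eq _ _
  by_cases hTFfin : TF = ∞
  · -- degenerate: `f` has infinite norm
    by_cases hg0 : eSobNorm (r-1) g = 0
    · -- then `g` vanishes a.e. and the left-hand side is zero
      have hTG0 : TG = 0 := by
        rw [hESg] at hg0
        rcases (ENNReal.rpow_eq_zero_iff).mp hg0 with ⟨h0, _⟩ | ⟨_, hlt⟩
        · exact h0
        · norm_num at hlt
      have hcoefg : ∀ m : ℤ, fourierCoef g m = 0 := by
        intro m
        have h0 : wE (r-1) m * (ENNReal.ofReal ‖fourierCoef g m‖) ^ 2 = 0 := by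
          have htg := hTG0
          rw [hTG] at htg
          exact ENNReal.tsum_eq_zero.mp htg m
        have hwne : wE (r-1) m ≠ 0 := by
          rw [wE]
          exact ne_of_gt (ENNReal.ofReal_pos.mpr (Real.rpow_pos_of_pos (wbase_pos m) _))
        rcases mul_eq_zero.mp h0 with hbad | hgood
        · exact absurd hbad hwne
        · have : ENNReal.ofReal ‖fourierCoef g m‖ = 0 := by
            exact pow_eq_zero_iff (n := 2) (by norm_num) |>.mp hgood
          have := ENNReal.ofReal_eq_zero.mp this
          exact norm_le_zero_iff.mp this
      have hgae := ae_zero_of_fourierCoef_zero hgi hcoefg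
      have hprod0 : (fun x => f x * g x) =ᵐ[volume.restrict (Set.Ioc 0 (2 * Real.pi))]
          (fun _ => (0:ℂ)) := by
        filter_upwards [hgae] with x hx
        have : g x = 0 := hx
        rw [this, mul_zero]
      have hcoeffg : ∀ n : ℤ, fourierCoef (fun x => f x * g x) n = 0 := by
        intro n
        rw [fourierCoef_congr_ae hprod0 n, fourierCoef]
        simp
      rw [eSobNorm_zero_of_coef_zero hcoeffg]
      exact zero_le
    · -- the right-hand side is infinite
      have hESftop : eSobNorm (s-1) f = ∞ := by
        rw [hESf, hTFfin]
        exact ENNReal.top_rpow_of_pos (by norm_num)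
      rw [hESftop]
      rw [ENNReal.mul_top hCne, ENNReal.top_mul hg0]
      exact le_top
  · -- main case : `f` has summable Fourier coefficients
    have hsum : Summable (fun k : ℤ => ‖fourierCoef f k‖) :=
      summable_of_wtsum_fin ha hTFfin
    have hcoef := fun n => coef_product_bound hfi hgi hsum n
    set F : ℤ → ℝ≥0∞ := fun k => ENNReal.ofReal ‖fourierCoef f k‖ with hF
    set G : ℤ → ℝ≥0∞ := fun m => ENNReal.ofReal ‖fourierCoef g m‖ with hG
    have hrw : r - 1 = -(1 - r) := by ring
    have hmain : (∑' n : ℤ, wE (r-1) n *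
        (ENNReal.ofReal ‖fourierCoef (fun x => f x * g x) n‖) ^ 2)
        ≤ c2 ^ 2 * CE * (TF * TG) := by
      calc (∑' n : ℤ, wE (r-1) n *
            (ENNReal.ofReal ‖fourierCoef (fun x => f x * g x) n‖) ^ 2)
          ≤ ∑' n : ℤ, wE (r-1) n * (c2 * ∑' k : ℤ, F k * G (n - k)) ^ 2 := by
            apply ENNReal.tsum_le_tsum
            intro n
            exact mul_le_mul_right (pow_le_pow_left' (hcoef n) 2) _
        _ = c2 ^ 2 * ∑' n : ℤ, wE (-(1-r)) n * (∑' k : ℤ, F k * G (n - k)) ^ 2 := by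
            rw [← ENNReal.tsum_mul_left]
            apply tsum_congr
            intro n
            rw [← hrw, mul_pow]
            ring
        _ ≤ c2 ^ 2 * ((ENNReal.ofReal (4 ^ ((1-r)/2))) ^ 2 * 12 * (∑' j : ℤ, wE (-(s-1)) j) *
              ((∑' k : ℤ, wE (s-1) k * (F k) ^ 2) * (∑' m : ℤ, wE (-(1-r)) m * (G m) ^ 2))) := by
            apply mul_le_mul_right
            exact core_seq ha h1 h2 F G
        _ = c2 ^ 2 * CE * (TF * TG) := by
            rw [hCE, hK, hTF, hTG]
            have : (∑' m : ℤ, wE (-(1-r)) m * (G m) ^ 2)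
                = ∑' m : ℤ, wE (r-1) m * (G m) ^ 2 := by
              apply tsum_congr; intro m; rw [← hrw]
            rw [this]
            ring
    calc eSobNorm (r-1) (fun x => f x * g x)
        = (∑' n : ℤ, wE (r-1) n *
            (ENNReal.ofReal ‖fourierCoef (fun x => f x * g x) n‖) ^ 2) ^ (1/2 : ℝ) :=
          eSobNorm_eq _ _
      _ ≤ (c2 ^ 2 * CE * (TF * TG)) ^ (1/2 : ℝ) :=
          ENNReal.rpow_le_rpow hmain (by norm_num)
      _ = Ctot * (TF ^ (1/2 : ℝ) * TG ^ (1/2 : ℝ)) := by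
          rw [ENNReal.mul_rpow_of_nonneg (c2 ^ 2 * CE) (TF * TG) (by norm_num : (0:ℝ) ≤ 1/2),
            ENNReal.mul_rpow_of_nonneg TF TG (by norm_num : (0:ℝ) ≤ 1/2), hCtot]
      _ = Ctot * eSobNorm (s-1) f * eSobNorm (r-1) g := by
          rw [hESf, hESg]
          ring
      _ ≤ ENNReal.ofReal (Ctot.toReal + 1) * eSobNorm (s-1) f * eSobNorm (r-1) g := by
          gcongr
end

section
/- Let s > 3/2 and r satisfy 2 − s ≤ r ≤ 1/2. Then there exists a constant C = C(s, r) > 0 such that for every k ∈ ℤ, ∑_{n∈ℤ} (1+n²)^{1-s} (1+(n-k)²)^{r-1} ≤ C (1+k²)^{r-1}. -/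
open scoped ENNReal

lemma summable_weight (t : ℝ) (ht : t < -1/2) :
    Summable (fun n : ℤ => (1 + (n : ℝ) ^ 2) ^ t) := by
  rw [summable_int_iff_summable_nat_and_neg]
  have key : Summable (fun n : ℕ => (1 + (n : ℝ) ^ 2) ^ t) := by
    have hsum : Summable (fun n : ℕ => 1 / |(n : ℝ) + 1| ^ (-2 * t)) :=
      (Real.summable_one_div_nat_add_rpow 1 (-2 * t)).2 (by linarith)
    apply Summable.of_nonneg_of_le (fun n => by positivity)
      (fun n => ?_) (hsum.mul_left ((2 : ℝ) ^ (-t)))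
    have h1 : ((n : ℝ) + 1) ^ 2 / 2 ≤ 1 + (n : ℝ) ^ 2 := by nlinarith [sq_nonneg ((n : ℝ) - 1)]
    have h2 : (0 : ℝ) < ((n : ℝ) + 1) ^ 2 / 2 := by positivity
    have := Real.rpow_le_rpow_of_nonpos h2 h1 (by linarith : t ≤ 0)
    calc (1 + (n : ℝ) ^ 2) ^ t ≤ (((n : ℝ) + 1) ^ 2 / 2) ^ t := this
      _ = (2:ℝ) ^ (-t) * (1 / |(n : ℝ) + 1| ^ (-2 * t)) := by
          rw [Real.div_rpow (by positivity) (by norm_num), Real.rpow_neg (by norm_num),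
            abs_of_pos (by positivity), ← Real.rpow_natCast ((n:ℝ)+1) 2,
            ← Real.rpow_mul (by positivity), ← Real.rpow_neg (by positivity)]
          push_cast
          rw [neg_mul, Real.rpow_neg (by positivity : (0:ℝ) ≤ (n:ℝ) + 1), one_div, inv_inv]
          rw [div_eq_mul_inv, mul_comm, Real.rpow_neg (by norm_num : (0:ℝ) ≤ 2)]
  refine ⟨key, key.congr fun n => by simp⟩

lemma key_pointwise (s r : ℝ) (hs : 3/2 < s) (hr1 : 2 - s ≤ r) (hr2 : r ≤ 1/2) (x y : ℝ) :
    (1 + x ^ 2) ^ (1 - s) * (1 + (x - y) ^ 2) ^ (r - 1) ≤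
      ((4 : ℝ) ^ (s - 1) + 4 ^ (1 - r)) * (1 + y ^ 2) ^ (r - 1) *
        ((1 + x ^ 2) ^ (1 - s) + (1 + (x - y) ^ 2) ^ (1 - s)) := by
  have hx : (0:ℝ) < 1 + x ^ 2 := by positivity
  have hxy : (0:ℝ) < 1 + (x - y) ^ 2 := by positivity
  have hy : (0:ℝ) < 1 + y ^ 2 := by positivity
  have hP : (0:ℝ) < (1 + x ^ 2) ^ (1 - s) := Real.rpow_pos_of_pos hx _
  have hQ : (0:ℝ) < (1 + (x - y) ^ 2) ^ (r - 1) := Real.rpow_pos_of_pos hxy _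
  have hQ' : (0:ℝ) < (1 + (x - y) ^ 2) ^ (1 - s) := Real.rpow_pos_of_pos hxy _
  have hW : (0:ℝ) < (1 + y ^ 2) ^ (r - 1) := Real.rpow_pos_of_pos hy _
  rcases le_or_gt (|y|) (2 * |x - y|) with h | h
  · -- far region: 1 + y² ≤ 4(1 + (x-y)²)
    have hb : (1 + y ^ 2) / 4 ≤ 1 + (x - y) ^ 2 := by
      nlinarith [sq_abs y, sq_abs (x - y), abs_nonneg y, abs_nonneg (x - y)]
    have h2 : (1 + (x - y) ^ 2) ^ (r - 1) ≤ ((1 + y ^ 2) / 4) ^ (r - 1) :=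
      Real.rpow_le_rpow_of_nonpos (by positivity) hb (by linarith)
    have h3 : ((1 + y ^ 2) / 4) ^ (r - 1) = 4 ^ (1 - r) * (1 + y ^ 2) ^ (r - 1) := by
      rw [Real.div_rpow hy.le (by norm_num), div_eq_mul_inv, ← Real.rpow_neg (by norm_num),
        mul_comm]
      ring_nf
    calc (1 + x ^ 2) ^ (1 - s) * (1 + (x - y) ^ 2) ^ (r - 1)
        ≤ (1 + x ^ 2) ^ (1 - s) * (4 ^ (1 - r) * (1 + y ^ 2) ^ (r - 1)) := by
          rw [← h3]; exact mul_le_mul_of_nonneg_left h2 hP.le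
      _ = (4:ℝ) ^ (1 - r) * (1 + y ^ 2) ^ (r - 1) * (1 + x ^ 2) ^ (1 - s) := by ring
      _ ≤ ((4 : ℝ) ^ (s - 1) + 4 ^ (1 - r)) * (1 + y ^ 2) ^ (r - 1) *
            ((1 + x ^ 2) ^ (1 - s) + (1 + (x - y) ^ 2) ^ (1 - s)) := by
          have h4 : (0:ℝ) < (4:ℝ) ^ (s - 1) := by positivity
          gcongr <;> linarith
  · -- near region: |x-y| < |y|/2, so 1+y² ≤ 4(1+x²) and (x-y)² ≤ y²
    have habs : |y| ≤ |x| + |x - y| := by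
      calc |y| = |x - (x - y)| := by ring_nf
        _ ≤ |x| + |x - y| := abs_sub _ _
    have hb : (1 + y ^ 2) / 4 ≤ 1 + x ^ 2 := by
      nlinarith [sq_abs y, sq_abs x, sq_abs (x - y), abs_nonneg x, abs_nonneg (x - y)]
    have hm : (x - y) ^ 2 ≤ y ^ 2 := by
      nlinarith [sq_abs y, sq_abs (x - y), abs_nonneg (x - y)]
    have h2 : (1 + x ^ 2) ^ (1 - s) ≤ ((1 + y ^ 2) / 4) ^ (1 - s) :=
      Real.rpow_le_rpow_of_nonpos (by positivity) hb (by linarith)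
    have h3 : ((1 + y ^ 2) / 4) ^ (1 - s) = 4 ^ (s - 1) * (1 + y ^ 2) ^ (1 - s) := by
      rw [Real.div_rpow hy.le (by norm_num), div_eq_mul_inv, ← Real.rpow_neg (by norm_num),
        mul_comm]
      ring_nf
    have h4 : (1 + (x - y) ^ 2) ^ (r - 1)
        = (1 + (x - y) ^ 2) ^ (1 - s) * (1 + (x - y) ^ 2) ^ (r + s - 2) := by
      rw [← Real.rpow_add hxy]; ring_nf
    have h5 : (1 + (x - y) ^ 2) ^ (r + s - 2) ≤ (1 + y ^ 2) ^ (r + s - 2) :=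
      Real.rpow_le_rpow hxy.le (by linarith) (by linarith)
    have h6 : (1 + y ^ 2) ^ (1 - s) * (1 + y ^ 2) ^ (r + s - 2) = (1 + y ^ 2) ^ (r - 1) := by
      rw [← Real.rpow_add hy]; ring_nf
    calc (1 + x ^ 2) ^ (1 - s) * (1 + (x - y) ^ 2) ^ (r - 1)
        = (1 + x ^ 2) ^ (1 - s) * (1 + (x - y) ^ 2) ^ (r + s - 2) * (1 + (x-y)^2) ^ (1-s) := by
          rw [h4]; ring
      _ ≤ (4 ^ (s - 1) * (1 + y ^ 2) ^ (1 - s)) * (1 + y ^ 2) ^ (r + s - 2)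
            * (1 + (x-y)^2) ^ (1-s) := by
          apply mul_le_mul_of_nonneg_right _ hQ'.le
          apply mul_le_mul (h3 ▸ h2) h5 (by positivity) (by positivity)
      _ = 4 ^ (s - 1) * (1 + y ^ 2) ^ (r - 1) * (1 + (x-y)^2) ^ (1-s) := by
          rw [mul_assoc ((4:ℝ) ^ (s-1)), h6]
      _ ≤ ((4 : ℝ) ^ (s - 1) + 4 ^ (1 - r)) * (1 + y ^ 2) ^ (r - 1) *
            ((1 + x ^ 2) ^ (1 - s) + (1 + (x - y) ^ 2) ^ (1 - s)) := by
          have h7 : (0:ℝ) < (4:ℝ) ^ (1 - r) := by positivity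
          gcongr <;> linarith

/-- For `s > 3/2` and `2 - s ≤ r ≤ 1/2`, there is `C = C(s,r) > 0` such that
for every `k ∈ ℤ`, `∑_{n ∈ ℤ} (1+n²)^{1-s} (1+(n-k)²)^{r-1} ≤ C (1+k²)^{r-1}`. -/
theorem sum_two_weights_estimate (s r : ℝ) (hs : 3/2 < s) (hr1 : 2 - s ≤ r) (hr2 : r ≤ 1/2) :
    ∃ C : ℝ, 0 < C ∧ ∀ k : ℤ,
      ∑' n : ℤ, ENNReal.ofReal
          ((1 + (n : ℝ) ^ 2) ^ (1 - s) * (1 + ((n : ℝ) - (k : ℝ)) ^ 2) ^ (r - 1)) ≤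
        ENNReal.ofReal (C * (1 + (k : ℝ) ^ 2) ^ (r - 1)) := by
  set g : ℤ → ℝ := fun n => (1 + (n : ℝ) ^ 2) ^ (1 - s) with hg_def
  have hg : Summable g := summable_weight (1 - s) (by linarith)
  have hg0 : ∀ n, 0 ≤ g n := fun n => by positivity
  set T : ℝ := ∑' n, g n with hT_def
  have hT1 : (1:ℝ) ≤ T := by
    have := Summable.le_tsum hg 0 (fun j _ => hg0 j)
    simpa [hg_def] using this
  set c₀ : ℝ := (4 : ℝ) ^ (s - 1) + 4 ^ (1 - r) with hc₀
  have hc₀pos : 0 < c₀ := by positivity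
  refine ⟨2 * c₀ * T, by positivity, fun k => ?_⟩
  have hW : (0:ℝ) ≤ (1 + (k : ℝ) ^ 2) ^ (r - 1) := by positivity
  calc ∑' n : ℤ, ENNReal.ofReal
          ((1 + (n : ℝ) ^ 2) ^ (1 - s) * (1 + ((n : ℝ) - (k : ℝ)) ^ 2) ^ (r - 1))
      ≤ ∑' n : ℤ, (ENNReal.ofReal (c₀ * (1 + (k : ℝ) ^ 2) ^ (r - 1)) *
          (ENNReal.ofReal (g n) + ENNReal.ofReal (g (n - k)))) := by
        apply ENNReal.tsum_le_tsum
        intro n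
        rw [← ENNReal.ofReal_add (hg0 n) (hg0 (n - k)), ← ENNReal.ofReal_mul (by positivity)]
        apply ENNReal.ofReal_le_ofReal
        have key := key_pointwise s r hs hr1 hr2 (n : ℝ) (k : ℝ)
        simp only [hg_def, hc₀]
        push_cast
        exact key
    _ = ENNReal.ofReal (c₀ * (1 + (k : ℝ) ^ 2) ^ (r - 1)) *
          ((∑' n : ℤ, ENNReal.ofReal (g n)) + ∑' n : ℤ, ENNReal.ofReal (g (n - k))) := by
        rw [ENNReal.tsum_mul_left, ENNReal.tsum_add]
    _ = ENNReal.ofReal (c₀ * (1 + (k : ℝ) ^ 2) ^ (r - 1)) *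
          (ENNReal.ofReal T + ENNReal.ofReal T) := by
        congr 1
        have hEq : ∑' n : ℤ, ENNReal.ofReal (g (n - k)) = ∑' n : ℤ, ENNReal.ofReal (g n) :=
          (Equiv.subRight k).tsum_eq (fun n => ENNReal.ofReal (g n))
        rw [hEq, ← ENNReal.ofReal_tsum_of_nonneg hg0 hg]
    _ = ENNReal.ofReal (2 * c₀ * T * (1 + (k : ℝ) ^ 2) ^ (r - 1)) := by
        rw [← ENNReal.ofReal_add (by linarith) (by linarith),
          ← ENNReal.ofReal_mul (by positivity)]
        congr 1
        ring
end

section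
/- Let s > 3/2 and r ≤ 1. Then there exists a constant C = C(s, r) > 0 such that for every integer k ≥ 0, ∑_{n > 2k} (1+n²)^{1-s} (1+(n-k)²)^{r-1} ≤ C (1+k²)^{r-1}, where the sum is over integers n with n > 2k. -/
open scoped ENNReal

lemma summable_aux (s : ℝ) (hs : 3/2 < s) :
    Summable (fun n : ℤ => (1 + (n : ℝ) ^ 2) ^ (1 - s)) := by
  apply Summable.of_norm_bounded_eventually (g := fun n : ℤ => |(n : ℝ)| ^ (-(2 * (s - 1))))
    (Real.summable_abs_int_rpow (by linarith))
  have hfin : ({0} : Set ℤ).Finite := Set.finite_singleton 0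
  filter_upwards [hfin.compl_mem_cofinite] with n hn
  simp only [Set.mem_compl_iff, Set.mem_singleton_iff] at hn
  have h1 : (1 : ℝ) ≤ (n : ℝ) ^ 2 := by
    have : (1 : ℤ) ≤ n ^ 2 := by
      rcases lt_or_gt_of_ne hn with h | h <;> nlinarith
    exact_mod_cast this
  rw [Real.norm_eq_abs, abs_of_nonneg (Real.rpow_nonneg (by positivity) _)]
  calc (1 + (n : ℝ) ^ 2) ^ (1 - s)
      ≤ ((n : ℝ) ^ 2) ^ (1 - s) :=
        Real.rpow_le_rpow_of_nonpos (by linarith) (by linarith) (by linarith)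
    _ = |(n : ℝ)| ^ (-(2 * (s - 1))) := by
        rw [← sq_abs, ← Real.rpow_natCast |(n : ℝ)| 2, ← Real.rpow_mul (abs_nonneg _)]
        congr 1
        push_cast
        ring

/-- For `s > 3/2` and `r ≤ 1`, there is `C = C(s,r) > 0` such that for every
integer `k ≥ 0`, `∑_{n > 2k} (1+n²)^{1-s} (1+(n-k)²)^{r-1} ≤ C (1+k²)^{r-1}`. -/
theorem sum_tail_estimate (s r : ℝ) (hs : 3/2 < s) (hr : r ≤ 1) :
    ∃ C : ℝ, 0 < C ∧ ∀ k : ℤ, 0 ≤ k →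
      ∑' n : {m : ℤ // 2 * k < m}, ENNReal.ofReal
          ((1 + ((n : ℤ) : ℝ) ^ 2) ^ (1 - s) *
            (1 + (((n : ℤ) : ℝ) - (k : ℝ)) ^ 2) ^ (r - 1)) ≤
        ENNReal.ofReal (C * (1 + (k : ℝ) ^ 2) ^ (r - 1)) := by
  have hsum := summable_aux s hs
  set C : ℝ := ∑' n : ℤ, (1 + (n : ℝ) ^ 2) ^ (1 - s) with hC
  have hnonneg : ∀ n : ℤ, 0 ≤ (1 + (n : ℝ) ^ 2) ^ (1 - s) :=
    fun n => Real.rpow_nonneg (by positivity) _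
  have hCpos : 0 < C := hsum.tsum_pos hnonneg 0 (by positivity)
  have hS : (∑' n : ℤ, ENNReal.ofReal ((1 + (n : ℝ) ^ 2) ^ (1 - s))) = ENNReal.ofReal C := by
    rw [hC, ENNReal.ofReal_tsum_of_nonneg hnonneg hsum]
  refine ⟨C, hCpos, fun k hk => ?_⟩
  have hkR : (0 : ℝ) ≤ (k : ℝ) := by exact_mod_cast hk
  calc ∑' n : {m : ℤ // 2 * k < m}, ENNReal.ofReal
          ((1 + ((n : ℤ) : ℝ) ^ 2) ^ (1 - s) *
            (1 + (((n : ℤ) : ℝ) - (k : ℝ)) ^ 2) ^ (r - 1))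
      ≤ ∑' n : {m : ℤ // 2 * k < m}, ENNReal.ofReal ((1 + ((n : ℤ) : ℝ) ^ 2) ^ (1 - s))
          * ENNReal.ofReal ((1 + (k : ℝ) ^ 2) ^ (r - 1)) := by
        refine ENNReal.tsum_le_tsum fun n => ?_
        rw [ENNReal.ofReal_mul (hnonneg _)]
        refine mul_le_mul_right (ENNReal.ofReal_le_ofReal ?_) _
        apply Real.rpow_le_rpow_of_nonpos (by positivity) _ (by linarith)
        have hn : (k : ℝ) ≤ ((n : ℤ) : ℝ) - (k : ℝ) := by
          have := n.2
          have : 2 * (k : ℝ) < ((n : ℤ) : ℝ) := by exact_mod_cast this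
          linarith
        have : (k : ℝ) ^ 2 ≤ (((n : ℤ) : ℝ) - (k : ℝ)) ^ 2 := by nlinarith
        linarith
    _ = (∑' n : {m : ℤ // 2 * k < m}, ENNReal.ofReal ((1 + ((n : ℤ) : ℝ) ^ 2) ^ (1 - s)))
          * ENNReal.ofReal ((1 + (k : ℝ) ^ 2) ^ (r - 1)) := ENNReal.tsum_mul_right
    _ ≤ (∑' n : ℤ, ENNReal.ofReal ((1 + (n : ℝ) ^ 2) ^ (1 - s)))
          * ENNReal.ofReal ((1 + (k : ℝ) ^ 2) ^ (r - 1)) := by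
        refine mul_le_mul_left ?_ _
        exact Summable.tsum_le_tsum_of_inj (Subtype.val) Subtype.val_injective
          (fun _ _ => zero_le) (fun _ => le_rfl) ENNReal.summable ENNReal.summable
    _ = ENNReal.ofReal (C * (1 + (k : ℝ) ^ 2) ^ (r - 1)) := by
        rw [hS, ← ENNReal.ofReal_mul hCpos.le]
end

section
/- Let s > 3/2 and r ≤ 1. Then there exists a constant C = C(s, r) > 0 such that for every integer k ≥ 0, ∑_{n ≥ 0} (1+n²)^{1-s} (1+(n+k)²)^{r-1} ≤ C (1+k²)^{r-1}, where the sum is over integers n ≥ 0. -/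
open scoped ENNReal

/-- For `s > 3/2` and `r ≤ 1`, there is `C = C(s,r) > 0` such that for every
integer `k ≥ 0`, `∑_{n ≥ 0} (1+n²)^{1-s} (1+(n+k)²)^{r-1} ≤ C (1+k²)^{r-1}`. -/
theorem sum_shifted_estimate (s r : ℝ) (hs : 3/2 < s) (hr : r ≤ 1) :
    ∃ C : ℝ, 0 < C ∧ ∀ k : ℤ, 0 ≤ k →
      ∑' n : {m : ℤ // 0 ≤ m}, ENNReal.ofReal
          ((1 + ((n : ℤ) : ℝ) ^ 2) ^ (1 - s) *
            (1 + (((n : ℤ) : ℝ) + (k : ℝ)) ^ 2) ^ (r - 1)) ≤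
        ENNReal.ofReal (C * (1 + (k : ℝ) ^ 2) ^ (r - 1)) := by
  -- Summability of (1+n²)^(1-s)
  have hS : Summable (fun n : ℕ => (1 + (n:ℝ)^2) ^ (1 - s)) := by
    have hcomp : Summable (fun n : ℕ => (2:ℝ) ^ (s-1) * ((n:ℝ)+1) ^ (2-2*s)) := by
      have h1 : Summable (fun n : ℕ => ((n:ℝ)) ^ (2-2*s)) :=
        Real.summable_nat_rpow.mpr (by linarith)
      have h2 : Summable (fun n : ℕ => ((n:ℝ)+1) ^ (2-2*s)) := by
        have := (summable_nat_add_iff 1).mpr h1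
        simpa using this
      exact h2.mul_left _
    refine Summable.of_nonneg_of_le (fun n => Real.rpow_nonneg (by positivity) _)
      (fun n => ?_) hcomp
    have hbase : ((n:ℝ)+1)^2 / 2 ≤ 1 + (n:ℝ)^2 := by nlinarith [sq_nonneg ((n:ℝ)-1)]
    have h0 : (0:ℝ) < ((n:ℝ)+1)^2 / 2 := by positivity
    calc (1 + (n:ℝ)^2) ^ (1-s) ≤ (((n:ℝ)+1)^2 / 2) ^ (1-s) :=
          Real.rpow_le_rpow_of_nonpos h0 hbase (by linarith)
      _ = (2:ℝ)^(s-1) * ((n:ℝ)+1) ^ (2-2*s) := by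
          rw [Real.div_rpow (by positivity) (by norm_num),
            ← Real.rpow_natCast ((n:ℝ)+1) 2, ← Real.rpow_mul (by positivity),
            div_eq_mul_inv, ← Real.rpow_neg (by norm_num : (0:ℝ) ≤ 2),
            show -(1-s) = s-1 by ring,
            show ((2:ℕ):ℝ)*(1-s) = 2-2*s by push_cast; ring, mul_comm]
  set C : ℝ := ∑' n : ℕ, (1 + (n:ℝ)^2) ^ (1 - s) with hC
  have hC1 : (0:ℝ) < C :=
    Summable.tsum_pos hS (fun n => Real.rpow_nonneg (by positivity) _) 0
      (by simp)
  refine ⟨C, hC1, fun k hk => ?_⟩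
  have hck : (0:ℝ) ≤ (1 + (k:ℝ)^2) ^ (r-1) := Real.rpow_nonneg (by positivity) _
  -- termwise bound
  have hterm : ∀ n : {m : ℤ // 0 ≤ m},
      ENNReal.ofReal ((1 + ((n : ℤ) : ℝ) ^ 2) ^ (1 - s) *
          (1 + (((n : ℤ) : ℝ) + (k : ℝ)) ^ 2) ^ (r - 1)) ≤
      ENNReal.ofReal ((1 + ((n : ℤ) : ℝ) ^ 2) ^ (1 - s)) *
        ENNReal.ofReal ((1 + (k:ℝ)^2) ^ (r-1)) := by
    intro n
    rw [← ENNReal.ofReal_mul (Real.rpow_nonneg (by positivity) _)]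
    refine ENNReal.ofReal_le_ofReal ?_
    have hn : (0:ℝ) ≤ ((n : ℤ) : ℝ) := by exact_mod_cast n.2
    have hk' : (0:ℝ) ≤ (k:ℝ) := by exact_mod_cast hk
    have hbase : 1 + (k:ℝ)^2 ≤ 1 + (((n : ℤ) : ℝ) + (k:ℝ))^2 := by nlinarith
    have := Real.rpow_le_rpow_of_nonpos (x := 1 + (k:ℝ)^2) (z := r-1) (by positivity) hbase (by linarith)
    exact mul_le_mul_of_nonneg_left this (Real.rpow_nonneg (by positivity) _)
  calc ∑' n : {m : ℤ // 0 ≤ m}, ENNReal.ofReal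
          ((1 + ((n : ℤ) : ℝ) ^ 2) ^ (1 - s) *
            (1 + (((n : ℤ) : ℝ) + (k : ℝ)) ^ 2) ^ (r - 1))
      ≤ ∑' n : {m : ℤ // 0 ≤ m},
          ENNReal.ofReal ((1 + ((n : ℤ) : ℝ) ^ 2) ^ (1 - s)) *
            ENNReal.ofReal ((1 + (k:ℝ)^2) ^ (r-1)) := ENNReal.tsum_le_tsum hterm
    _ = (∑' n : {m : ℤ // 0 ≤ m},
          ENNReal.ofReal ((1 + ((n : ℤ) : ℝ) ^ 2) ^ (1 - s))) *
            ENNReal.ofReal ((1 + (k:ℝ)^2) ^ (r-1)) := by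
          rw [ENNReal.tsum_mul_right]
    _ ≤ ENNReal.ofReal C * ENNReal.ofReal ((1 + (k:ℝ)^2) ^ (r-1)) := by
          refine mul_le_mul_left ?_ _
          have he : ∑' n : {m : ℤ // 0 ≤ m},
              ENNReal.ofReal ((1 + ((n : ℤ) : ℝ) ^ 2) ^ (1 - s)) =
              ∑' n : ℕ, ENNReal.ofReal ((1 + (n:ℝ) ^ 2) ^ (1 - s)) := by
            let e : ℕ ≃ {m : ℤ // 0 ≤ m} :=
              ⟨fun n => ⟨(n:ℤ), Int.ofNat_nonneg n⟩, fun m => m.1.toNat,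
               fun n => by simp, fun m => by
                 ext; simp [Int.toNat_of_nonneg m.2]⟩
            rw [← e.tsum_eq]
            simp [e]
          rw [he, ← ENNReal.ofReal_tsum_of_nonneg (fun n => Real.rpow_nonneg (by positivity) _) hS]
    _ = ENNReal.ofReal (C * (1 + (k:ℝ)^2) ^ (r-1)) := by
          rw [← ENNReal.ofReal_mul (by linarith)]
end

section
/- Let s > 3/2 and r ≤ 1. Then there exists a constant C = C(s, r) > 0 such that for every integer k ≥ 0, ∑_{0 ≤ n ≤ k/2} (1+n²)^{1-s} (1+(n-k)²)^{r-1} ≤ C (1+k²)^{r-1}, where the sum is over integers n with 0 ≤ n ≤ k/2. -/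
open scoped ENNReal

/-- For `s > 3/2` and `r ≤ 1`, there is `C = C(s,r) > 0` such that for every
integer `k ≥ 0`, `∑_{0 ≤ n ≤ k/2} (1+n²)^{1-s} (1+(n-k)²)^{r-1} ≤ C (1+k²)^{r-1}`, the sum
running over the integers `n` with `0 ≤ n ≤ k/2` (i.e. `0 ≤ n` and `2n ≤ k`). -/
theorem sum_lower_block_estimate (s r : ℝ) (hs : 3/2 < s) (hr : r ≤ 1) :
    ∃ C : ℝ, 0 < C ∧ ∀ k : ℤ, 0 ≤ k →
      ∑' n : {m : ℤ // 0 ≤ m ∧ 2 * m ≤ k}, ENNReal.ofReal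
          ((1 + ((n : ℤ) : ℝ) ^ 2) ^ (1 - s) *
            (1 + (((n : ℤ) : ℝ) - (k : ℝ)) ^ 2) ^ (r - 1)) ≤
        ENNReal.ofReal (C * (1 + (k : ℝ) ^ 2) ^ (r - 1)) := by
  -- summability of ∑ (1+n²)^(1-s)
  have hsum : Summable (fun n : ℕ => (1 + (n:ℝ)^2)^(1-s)) := by
    have h1 : Summable (fun n : ℕ => ((n:ℝ))^(2-2*s)) :=
      Real.summable_nat_rpow.mpr (by linarith)
    have h2 : Summable (fun n : ℕ => (2:ℝ)^(s-1) * (((n:ℝ)+1))^(2-2*s)) := by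
      have := (summable_nat_add_iff 1).mpr h1
      simpa [add_comm] using this.mul_left ((2:ℝ)^(s-1))
    refine h2.of_nonneg_of_le (fun n => Real.rpow_nonneg (by positivity) _) (fun n => ?_)
    have hpos : (0:ℝ) < ((n:ℝ)+1)^2/2 := by positivity
    have hle : ((n:ℝ)+1)^2/2 ≤ 1 + (n:ℝ)^2 := by nlinarith [sq_nonneg ((n:ℝ) - 1)]
    calc (1 + (n:ℝ)^2)^(1-s) ≤ (((n:ℝ)+1)^2/2)^(1-s) :=
          Real.rpow_le_rpow_of_nonpos hpos hle (by linarith)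
      _ = (2:ℝ)^(s-1) * ((n:ℝ)+1)^(2-2*s) := by
          rw [Real.div_rpow (by positivity) (by norm_num), div_eq_mul_inv,
            ← Real.rpow_natCast ((n:ℝ)+1) 2, ← Real.rpow_mul (by positivity),
            ← Real.rpow_neg (by norm_num : (0:ℝ) ≤ 2),
            show ((2:ℕ):ℝ) * (1-s) = 2-2*s by push_cast; ring,
            show -(1-s) = s-1 by ring, mul_comm]
  set S : ℝ := ∑' n : ℕ, (1 + (n:ℝ)^2)^(1-s) with hS
  have hSnn : 0 ≤ S := tsum_nonneg (fun n => Real.rpow_nonneg (by positivity) _)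
  refine ⟨(4:ℝ)^(1-r) * (S + 1), by positivity, fun k hk => ?_⟩
  have hk' : (0:ℝ) ≤ (k:ℝ) := by exact_mod_cast hk
  have hDpos : (0:ℝ) < (1 + (k:ℝ)^2)^(r-1) := Real.rpow_pos_of_pos (by positivity) _
  set D : ℝ := (4:ℝ)^(1-r) * (1 + (k:ℝ)^2)^(r-1) with hD
  have hDnn : 0 ≤ D := by positivity
  -- pointwise bound on the second factor
  have key : ∀ n : {m : ℤ // 0 ≤ m ∧ 2 * m ≤ k},
      (1 + (((n : ℤ) : ℝ) - (k : ℝ)) ^ 2) ^ (r - 1) ≤ D := by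
    rintro ⟨m, hm0, hm2⟩
    have hm0' : (0:ℝ) ≤ (m:ℝ) := by exact_mod_cast hm0
    have hm2' : 2 * (m:ℝ) ≤ (k:ℝ) := by exact_mod_cast hm2
    have h1 : (1 + (k:ℝ)^2)/4 ≤ 1 + ((m:ℝ) - (k:ℝ))^2 := by nlinarith
    have hpos : (0:ℝ) < (1 + (k:ℝ)^2)/4 := by positivity
    calc (1 + ((m:ℝ) - (k:ℝ))^2)^(r-1) ≤ ((1 + (k:ℝ)^2)/4)^(r-1) :=
          Real.rpow_le_rpow_of_nonpos hpos h1 (by linarith)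
      _ = D := by
          rw [hD, Real.div_rpow (by positivity) (by norm_num),
            div_eq_mul_inv, ← Real.rpow_neg (by norm_num), mul_comm]
          ring_nf
  calc ∑' n : {m : ℤ // 0 ≤ m ∧ 2 * m ≤ k}, ENNReal.ofReal
          ((1 + ((n : ℤ) : ℝ) ^ 2) ^ (1 - s) *
            (1 + (((n : ℤ) : ℝ) - (k : ℝ)) ^ 2) ^ (r - 1))
      ≤ ∑' n : {m : ℤ // 0 ≤ m ∧ 2 * m ≤ k},
          ENNReal.ofReal ((1 + ((n : ℤ) : ℝ) ^ 2) ^ (1 - s)) * ENNReal.ofReal D := by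
        refine ENNReal.tsum_le_tsum (fun n => ?_)
        rw [← ENNReal.ofReal_mul (Real.rpow_nonneg (by positivity) _)]
        exact ENNReal.ofReal_le_ofReal
          (mul_le_mul_of_nonneg_left (key n) (Real.rpow_nonneg (by positivity) _))
    _ = (∑' n : {m : ℤ // 0 ≤ m ∧ 2 * m ≤ k},
          ENNReal.ofReal ((1 + ((n : ℤ) : ℝ) ^ 2) ^ (1 - s))) * ENNReal.ofReal D :=
        ENNReal.tsum_mul_right
    _ ≤ (∑' n : ℕ, ENNReal.ofReal ((1 + (n:ℝ)^2)^(1-s))) * ENNReal.ofReal D := by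
        refine mul_le_mul_left ?_ _
        have hinj : Function.Injective
            (fun n : {m : ℤ // 0 ≤ m ∧ 2 * m ≤ k} => (n : ℤ).toNat) := by
          rintro ⟨a, ha, _⟩ ⟨b, hb, _⟩ h
          dsimp only at h
          simp only [Subtype.mk.injEq]
          omega
        have := ENNReal.tsum_comp_le_tsum_of_injective hinj
          (fun n : ℕ => ENNReal.ofReal ((1 + (n:ℝ)^2)^(1-s)))
        refine le_trans (le_of_eq ?_) this
        refine tsum_congr (fun n => ?_)
        have h' : (((n : ℤ).toNat : ℕ) : ℝ) = (((n : ℤ) : ℝ)) := by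
          have := Int.toNat_of_nonneg n.2.1
          exact_mod_cast congrArg (fun z : ℤ => (z : ℝ)) this
        rw [h']
    _ = ENNReal.ofReal S * ENNReal.ofReal D := by
        rw [hS, ENNReal.ofReal_tsum_of_nonneg (fun n => Real.rpow_nonneg (by positivity) _) hsum]
    _ = ENNReal.ofReal (S * D) := (ENNReal.ofReal_mul hSnn).symm
    _ ≤ ENNReal.ofReal ((4:ℝ)^(1-r) * (S + 1) * (1 + (k:ℝ)^2)^(r-1)) := by
        refine ENNReal.ofReal_le_ofReal ?_
        rw [hD]
        nlinarith [Real.rpow_pos_of_pos (show (0:ℝ) < 4 by norm_num) (1-r)]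
end

section
/- Let s > 1 and r < 1/2. Then there exists a constant C = C(s, r) > 0 such that for every integer k ≥ 0, ∑_{k/2 ≤ n ≤ 3k/2} (1+n²)^{1-s} (1+(n-k)²)^{r-1} ≤ C (1+k²)^{1-s}, where the sum is over integers n with k/2 ≤ n ≤ 3k/2. -/
open scoped ENNReal

/-- For `s > 1` and `r < 1/2`, there is `C = C(s,r) > 0` such that for every
integer `k ≥ 0`, `∑_{k/2 ≤ n ≤ 3k/2} (1+n²)^{1-s} (1+(n-k)²)^{r-1} ≤ C (1+k²)^{1-s}`, the sum
running over the integers `n` with `k/2 ≤ n ≤ 3k/2` (i.e. `k ≤ 2n` and `2n ≤ 3k`). -/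
theorem sum_middle_block_estimate (s r : ℝ) (hs : 1 < s) (hr : r < 1/2) :
    ∃ C : ℝ, 0 < C ∧ ∀ k : ℤ, 0 ≤ k →
      ∑' n : {m : ℤ // k ≤ 2 * m ∧ 2 * m ≤ 3 * k}, ENNReal.ofReal
          ((1 + ((n : ℤ) : ℝ) ^ 2) ^ (1 - s) *
            (1 + (((n : ℤ) : ℝ) - (k : ℝ)) ^ 2) ^ (r - 1)) ≤
        ENNReal.ofReal (C * (1 + (k : ℝ) ^ 2) ^ (1 - s)) := by
  set f : ℤ → ℝ := fun m => (1 + (m : ℝ) ^ 2) ^ (r - 1) with hf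
  have hfnn : ∀ m : ℤ, 0 ≤ f m := fun m => Real.rpow_nonneg (by positivity) _
  have hsum : Summable f := by
    rw [← Finset.summable_compl_iff ({0} : Finset ℤ)]
    refine Summable.of_nonneg_of_le (fun m => hfnn m) ?_
      ((Real.summable_abs_int_rpow (show (1:ℝ) < 2 * (1 - r) by linarith)).subtype _)
    · intro m
      have hm0 : (m : ℤ) ≠ 0 := by simpa using m.2
      have h1 : (1 : ℝ) ≤ |((m : ℤ) : ℝ)| := by
        rw [← Int.cast_abs]
        exact_mod_cast Int.one_le_abs hm0
      have habs : ((m : ℤ) : ℝ) ^ 2 = |((m : ℤ) : ℝ)| ^ (2 : ℕ) := (sq_abs _).symm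
      have h2 : f m ≤ (((m : ℤ) : ℝ) ^ 2) ^ (r - 1) := by
        apply Real.rpow_le_rpow_of_nonpos (by positivity) (by linarith) (by linarith)
      calc f m ≤ (((m : ℤ) : ℝ) ^ 2) ^ (r - 1) := h2
        _ = |((m : ℤ) : ℝ)| ^ (-(2 * (1 - r))) := by
            rw [habs, ← Real.rpow_natCast |((m : ℤ) : ℝ)| 2,
              ← Real.rpow_mul (abs_nonneg _)]
            norm_num
            ring_nf
  set S : ℝ := ∑' m, f m with hS
  have hS1 : (1 : ℝ) ≤ S := by
    have := Summable.le_tsum hsum 0 (fun i _ => hfnn i)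
    simpa [f] using this
  have h4pos : (0 : ℝ) < (4 : ℝ) ^ (s - 1) := Real.rpow_pos_of_pos (by norm_num) _
  refine ⟨(4 : ℝ) ^ (s - 1) * S, by positivity, fun k hk => ?_⟩
  have hkpos : (0 : ℝ) < 1 + (k : ℝ) ^ 2 := by positivity
  set c : ℝ := (4 : ℝ) ^ (s - 1) * (1 + (k : ℝ) ^ 2) ^ (1 - s) with hc
  have hcnn : 0 ≤ c := by positivity
  have hterm : ∀ n : {m : ℤ // k ≤ 2 * m ∧ 2 * m ≤ 3 * k},
      (1 + ((n : ℤ) : ℝ) ^ 2) ^ (1 - s) ≤ c := by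
    rintro ⟨n, hn1, hn2⟩
    have hk' : (0 : ℝ) ≤ (k : ℝ) := by exact_mod_cast hk
    have hn1' : (k : ℝ) ≤ 2 * (n : ℝ) := by exact_mod_cast hn1
    have hsq : (k : ℝ) ^ 2 ≤ 4 * (n : ℝ) ^ 2 := by nlinarith
    have h14 : (1 + (k : ℝ) ^ 2) / 4 ≤ 1 + (n : ℝ) ^ 2 := by nlinarith
    calc (1 + ((n : ℤ) : ℝ) ^ 2) ^ (1 - s)
        ≤ ((1 + (k : ℝ) ^ 2) / 4) ^ (1 - s) :=
          Real.rpow_le_rpow_of_nonpos (by positivity) h14 (by linarith)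
      _ = c := by
          rw [Real.div_rpow (by positivity) (by norm_num), hc,
            show (s - 1 : ℝ) = -(1 - s) by ring, Real.rpow_neg (by norm_num)]
          field_simp
  calc ∑' n : {m : ℤ // k ≤ 2 * m ∧ 2 * m ≤ 3 * k}, ENNReal.ofReal
          ((1 + ((n : ℤ) : ℝ) ^ 2) ^ (1 - s) *
            (1 + (((n : ℤ) : ℝ) - (k : ℝ)) ^ 2) ^ (r - 1))
      ≤ ∑' n : {m : ℤ // k ≤ 2 * m ∧ 2 * m ≤ 3 * k},
          ENNReal.ofReal c * ENNReal.ofReal (f ((n : ℤ) - k)) := by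
        apply ENNReal.tsum_le_tsum
        intro n
        rw [← ENNReal.ofReal_mul hcnn]
        apply ENNReal.ofReal_le_ofReal
        have : f ((n : ℤ) - k) = (1 + (((n : ℤ) : ℝ) - (k : ℝ)) ^ 2) ^ (r - 1) := by
          simp [f]
        rw [this]
        exact mul_le_mul_of_nonneg_right (hterm n) (Real.rpow_nonneg (by positivity) _)
    _ = ENNReal.ofReal c * ∑' n : {m : ℤ // k ≤ 2 * m ∧ 2 * m ≤ 3 * k},
          ENNReal.ofReal (f ((n : ℤ) - k)) := ENNReal.tsum_mul_left
    _ ≤ ENNReal.ofReal c * ∑' m : ℤ, ENNReal.ofReal (f m) := by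
        gcongr
        refine Summable.tsum_le_tsum_of_inj (fun n => (n : ℤ) - k) ?_ (fun _ _ => zero_le)
          (fun _ => le_rfl) ENNReal.summable ENNReal.summable
        intro a b hab
        simp only [sub_left_inj] at hab
        exact Subtype.ext hab
    _ = ENNReal.ofReal c * ENNReal.ofReal S := by
        rw [hS, ENNReal.ofReal_tsum_of_nonneg hfnn hsum]
    _ = ENNReal.ofReal ((4 : ℝ) ^ (s - 1) * S * (1 + (k : ℝ) ^ 2) ^ (1 - s)) := by
        rw [← ENNReal.ofReal_mul hcnn, hc]
        ring_nf
end

section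
/- Fix p, q > 0 with p + q > 1 and fix ε > 0. Set ε_q = ε if q = 1 and ε_q = 0 if q ≠ 1, set ε_p = ε if p = 1 and ε_p = 0 if p ≠ 1, and let ρ = min{p − ε_q, q − ε_p, p + q − 1}. Then there exists a constant C = C(p, q, ε) > 0 such that for all α, β ∈ ℝ, ∫_ℝ (1+|x−α|)^{−p} (1+|x−β|)^{−q} dx ≤ C (1+|α−β|)^{−ρ}. -/
open MeasureTheory Set Real
open scoped ENNReal

private lemma measAux2 (a c s : ℝ) :
    Measurable (fun x : ℝ => ENNReal.ofReal (c * (1 + |x - a|) ^ s)) := by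
  apply ENNReal.measurable_ofReal.comp
  have hcont : Continuous fun x : ℝ => c * (1 + |x - a|) ^ s := by
    apply continuous_const.mul
    exact (continuous_const.add (continuous_id.sub continuous_const).abs).rpow_const
      (fun x => Or.inl (by show (1:ℝ) + |x - a| ≠ 0; positivity))
  exact hcont.measurable

private lemma measAux (a s : ℝ) :
    Measurable (fun x : ℝ => ENNReal.ofReal ((1 + |x - a|) ^ s)) := by
  have := measAux2 a 1 s
  simpa using this

private lemma shift_lintegral (S : Set ℝ) (G : ℝ → ℝ≥0∞) (a : ℝ) :
    ∫⁻ x in (fun x : ℝ => x - a) ⁻¹' S, G (x - a) = ∫⁻ u in S, G u :=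
  (measurePreserving_sub_right volume a).setLIntegral_comp_preimage_emb
    (MeasurableEquiv.subRight a).measurableEmbedding G S

private lemma reflect_lintegral (S : Set ℝ) (G : ℝ → ℝ≥0∞) :
    ∫⁻ x in Neg.neg ⁻¹' S, G (-x) = ∫⁻ u in S, G u :=
  (Measure.measurePreserving_neg volume).setLIntegral_comp_preimage_emb
    (MeasurableEquiv.neg ℝ).measurableEmbedding G S

private lemma tail_Ioi {r T : ℝ} (hr : 1 < r) (hT : 0 ≤ T) :
    ∫⁻ u in Ioi T, ENNReal.ofReal ((1 + u) ^ (-r)) ≤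
      ENNReal.ofReal ((1 + T) ^ (1 - r) / (r - 1)) := by
  have hT1 : (0:ℝ) < 1 + T := by linarith
  have hpre : (fun x : ℝ => x - 1) ⁻¹' (Ioi T) = Ioi (1 + T) := by
    ext x; simp only [mem_preimage, mem_Ioi]; constructor <;> intro h <;> linarith
  have hshift : ∫⁻ u in Ioi T, ENNReal.ofReal ((1 + u) ^ (-r))
      = ∫⁻ x in Ioi (1 + T), ENNReal.ofReal (x ^ (-r)) := by
    have h := shift_lintegral (Ioi T) (fun u => ENNReal.ofReal ((1 + u) ^ (-r))) 1
    rw [hpre] at h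
    rw [← h]
    apply lintegral_congr
    intro x
    rw [show 1 + (x - 1) = x by ring]
  rw [hshift]
  have hint : IntegrableOn (fun x : ℝ => x ^ (-r)) (Ioi (1 + T)) :=
    integrableOn_Ioi_rpow_of_lt (by linarith) hT1
  have h0 : 0 ≤ᵐ[volume.restrict (Ioi (1 + T))] fun x : ℝ => x ^ (-r) := by
    filter_upwards [ae_restrict_mem measurableSet_Ioi] with x hx
    exact rpow_nonneg (le_of_lt (lt_trans hT1 hx)) _
  rw [← ofReal_integral_eq_lintegral_ofReal hint h0]
  apply ENNReal.ofReal_le_ofReal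
  rw [integral_Ioi_rpow_of_lt (by linarith) hT1]
  apply le_of_eq
  rw [show (-r + 1) = -(r - 1) by ring, div_neg, neg_div, neg_neg,
    show -(r - 1) = 1 - r by ring]

private lemma bulk_Ioc {c T : ℝ} (hc : -1 < c) (hT : 0 ≤ T) :
    ∫⁻ u in Ioc 0 T, ENNReal.ofReal ((1 + u) ^ c) ≤
      ENNReal.ofReal ((1 + T) ^ (c + 1) / (c + 1)) := by
  have hc1 : 0 < c + 1 := by linarith
  have hpre : (fun x : ℝ => x - 1) ⁻¹' (Ioc 0 T) = Ioc 1 (1 + T) := by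
    ext x; simp only [mem_preimage, mem_Ioc]; constructor <;> intro h <;>
      constructor <;> linarith [h.1, h.2]
  have hshift : ∫⁻ u in Ioc 0 T, ENNReal.ofReal ((1 + u) ^ c)
      = ∫⁻ x in Ioc 1 (1 + T), ENNReal.ofReal (x ^ c) := by
    have h := shift_lintegral (Ioc 0 T) (fun u => ENNReal.ofReal ((1 + u) ^ c)) 1
    rw [hpre] at h
    rw [← h]
    apply lintegral_congr
    intro x
    rw [show 1 + (x - 1) = x by ring]
  rw [hshift]
  have hcont : ContinuousOn (fun x : ℝ => x ^ c) (Icc 1 (1 + T)) := by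
    apply ContinuousOn.rpow_const continuousOn_id
    intro x hx
    exact Or.inl (by nlinarith [hx.1] : x ≠ 0)
  have hint : IntegrableOn (fun x : ℝ => x ^ c) (Ioc 1 (1 + T)) :=
    (hcont.integrableOn_compact isCompact_Icc).mono_set Ioc_subset_Icc_self
  have h0 : 0 ≤ᵐ[volume.restrict (Ioc 1 (1 + T))] fun x : ℝ => x ^ c := by
    filter_upwards [ae_restrict_mem measurableSet_Ioc] with x hx
    exact rpow_nonneg (by linarith [hx.1]) _
  rw [← ofReal_integral_eq_lintegral_ofReal hint h0]
  apply ENNReal.ofReal_le_ofReal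
  rw [← intervalIntegral.integral_of_le (by linarith : (1:ℝ) ≤ 1 + T),
    integral_rpow (Or.inl hc), Real.one_rpow]
  exact (div_le_div_iff_of_pos_right hc1).mpr (by linarith)


private lemma two_inv_rpow (q : ℝ) : ((2:ℝ)⁻¹) ^ (-q) = 2 ^ q := by
  rw [Real.inv_rpow (by norm_num : (0:ℝ) ≤ 2), ← Real.rpow_neg (by norm_num : (0:ℝ) ≤ 2),
    neg_neg]

private lemma tail_abs {r : ℝ} (hr : 1 < r) {T : ℝ} (hT : 0 ≤ T) :
    ∫⁻ u in {u : ℝ | T ≤ |u|}, ENNReal.ofReal ((1 + |u|) ^ (-r)) ≤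
      ENNReal.ofReal (2 * ((1 + T) ^ (1 - r) / (r - 1))) := by
  have hone : ∫⁻ u in Ici T, ENNReal.ofReal ((1 + |u|) ^ (-r)) ≤
      ENNReal.ofReal ((1 + T) ^ (1 - r) / (r - 1)) := by
    rw [← setLIntegral_congr (Ioi_ae_eq_Ici (a := T))]
    calc ∫⁻ u in Ioi T, ENNReal.ofReal ((1 + |u|) ^ (-r))
        = ∫⁻ u in Ioi T, ENNReal.ofReal ((1 + u) ^ (-r)) := by
          apply setLIntegral_congr_fun measurableSet_Ioi
          exact fun u hu => by simp only [abs_of_nonneg (hT.trans hu.le)]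
      _ ≤ _ := tail_Ioi hr hT
  have hneg : ∫⁻ u in Iic (-T), ENNReal.ofReal ((1 + |u|) ^ (-r)) ≤
      ENNReal.ofReal ((1 + T) ^ (1 - r) / (r - 1)) := by
    have hpre : Neg.neg ⁻¹' (Ici T) = Iic (-T) := by
      ext x; simp only [mem_preimage, mem_Ici, mem_Iic]; constructor <;> intro h <;> linarith
    calc ∫⁻ u in Iic (-T), ENNReal.ofReal ((1 + |u|) ^ (-r))
        = ∫⁻ x in Neg.neg ⁻¹' (Ici T), ENNReal.ofReal ((1 + |(-x)|) ^ (-r)) := by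
          rw [hpre]; simp only [abs_neg]
      _ = ∫⁻ u in Ici T, ENNReal.ofReal ((1 + |u|) ^ (-r)) :=
          reflect_lintegral (Ici T) (fun u => ENNReal.ofReal ((1 + |u|) ^ (-r)))
      _ ≤ _ := hone
  have hsub : {u : ℝ | T ≤ |u|} ⊆ Iic (-T) ∪ Ici T := by
    intro u hu
    rcases le_abs.mp (show T ≤ |u| from hu) with h | h
    · exact Or.inr (mem_Ici.mpr h)
    · exact Or.inl (mem_Iic.mpr (by linarith))
  have hnn : 0 ≤ (1 + T) ^ (1 - r) / (r - 1) :=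
    div_nonneg (rpow_nonneg (by linarith) _) (by linarith)
  calc ∫⁻ u in {u : ℝ | T ≤ |u|}, ENNReal.ofReal ((1 + |u|) ^ (-r))
      ≤ ∫⁻ u in Iic (-T) ∪ Ici T, ENNReal.ofReal ((1 + |u|) ^ (-r)) := lintegral_mono_set hsub
    _ ≤ (∫⁻ u in Iic (-T), ENNReal.ofReal ((1 + |u|) ^ (-r)))
        + ∫⁻ u in Ici T, ENNReal.ofReal ((1 + |u|) ^ (-r)) := lintegral_union_le _ _ _
    _ ≤ ENNReal.ofReal ((1 + T) ^ (1 - r) / (r - 1))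
        + ENNReal.ofReal ((1 + T) ^ (1 - r) / (r - 1)) := add_le_add hneg hone
    _ = ENNReal.ofReal (2 * ((1 + T) ^ (1 - r) / (r - 1))) := by
        rw [← ENNReal.ofReal_add hnn hnn]; ring_nf

private lemma bulk_abs {c : ℝ} (hc : -1 < c) {T : ℝ} (hT : 0 ≤ T) :
    ∫⁻ u in {u : ℝ | |u| ≤ T}, ENNReal.ofReal ((1 + |u|) ^ c) ≤
      ENNReal.ofReal (2 * ((1 + T) ^ (c + 1) / (c + 1))) := by
  have hpos : ∫⁻ u in Ioc 0 T, ENNReal.ofReal ((1 + |u|) ^ c) ≤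
      ENNReal.ofReal ((1 + T) ^ (c + 1) / (c + 1)) := by
    calc ∫⁻ u in Ioc 0 T, ENNReal.ofReal ((1 + |u|) ^ c)
        = ∫⁻ u in Ioc 0 T, ENNReal.ofReal ((1 + u) ^ c) := by
          apply setLIntegral_congr_fun measurableSet_Ioc
          exact fun u hu => by simp only [abs_of_nonneg hu.1.le]
      _ ≤ _ := bulk_Ioc hc hT
  have hneg : ∫⁻ u in Icc (-T) 0, ENNReal.ofReal ((1 + |u|) ^ c) ≤
      ENNReal.ofReal ((1 + T) ^ (c + 1) / (c + 1)) := by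
    have hpre : Neg.neg ⁻¹' (Icc 0 T) = Icc (-T) 0 := by
      ext x; simp only [mem_preimage, mem_Icc]; constructor <;> intro h <;>
        constructor <;> linarith [h.1, h.2]
    calc ∫⁻ u in Icc (-T) 0, ENNReal.ofReal ((1 + |u|) ^ c)
        = ∫⁻ x in Neg.neg ⁻¹' (Icc 0 T), ENNReal.ofReal ((1 + |(-x)|) ^ c) := by
          rw [hpre]; simp only [abs_neg]
      _ = ∫⁻ u in Icc 0 T, ENNReal.ofReal ((1 + |u|) ^ c) :=
          reflect_lintegral (Icc 0 T) (fun u => ENNReal.ofReal ((1 + |u|) ^ c))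
      _ = ∫⁻ u in Ioc 0 T, ENNReal.ofReal ((1 + |u|) ^ c) :=
          (setLIntegral_congr (Ioc_ae_eq_Icc (a := (0:ℝ)) (b := T))).symm
      _ ≤ _ := hpos
  have hsub : {u : ℝ | |u| ≤ T} ⊆ Icc (-T) 0 ∪ Ioc 0 T := by
    intro u hu
    rcases le_total u 0 with h | h
    · exact Or.inl ⟨(abs_le.mp hu).1, h⟩
    · rcases eq_or_lt_of_le h with h' | h'
      · exact Or.inl ⟨(abs_le.mp hu).1, h'.symm.le⟩
      · exact Or.inr ⟨h', (abs_le.mp hu).2⟩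
  have hnn : 0 ≤ (1 + T) ^ (c + 1) / (c + 1) :=
    div_nonneg (rpow_nonneg (by linarith) _) (by linarith)
  calc ∫⁻ u in {u : ℝ | |u| ≤ T}, ENNReal.ofReal ((1 + |u|) ^ c)
      ≤ ∫⁻ u in Icc (-T) 0 ∪ Ioc 0 T, ENNReal.ofReal ((1 + |u|) ^ c) := lintegral_mono_set hsub
    _ ≤ (∫⁻ u in Icc (-T) 0, ENNReal.ofReal ((1 + |u|) ^ c))
        + ∫⁻ u in Ioc 0 T, ENNReal.ofReal ((1 + |u|) ^ c) := lintegral_union_le _ _ _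
    _ ≤ ENNReal.ofReal ((1 + T) ^ (c + 1) / (c + 1))
        + ENNReal.ofReal ((1 + T) ^ (c + 1) / (c + 1)) := add_le_add hneg hpos
    _ = ENNReal.ofReal (2 * ((1 + T) ^ (c + 1) / (c + 1))) := by
        rw [← ENNReal.ofReal_add hnn hnn]; ring_nf

private lemma bulkBound (p m : ℝ) (hp : 0 < p) (hm0 : 0 ≤ m) (hm1 : 1 - p ≤ m)
    (hcase : 1 < p ∨ 0 < m) :
    ∃ K : ℝ, 0 < K ∧ ∀ T : ℝ, 0 ≤ T →
      ∫⁻ u in {u : ℝ | |u| ≤ T}, ENNReal.ofReal ((1 + |u|) ^ (-p)) ≤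
        ENNReal.ofReal (K * (1 + T) ^ m) := by
  rcases hcase with hp1 | hm
  · refine ⟨2 * (1 / (p - 1)), by
      have h2 : (0:ℝ) < 1 / (p - 1) := one_div_pos.mpr (by linarith)
      linarith, ?_⟩
    intro T hT
    calc ∫⁻ u in {u : ℝ | |u| ≤ T}, ENNReal.ofReal ((1 + |u|) ^ (-p))
        ≤ ∫⁻ u in {u : ℝ | (0:ℝ) ≤ |u|}, ENNReal.ofReal ((1 + |u|) ^ (-p)) :=
          lintegral_mono_set (fun u _ => abs_nonneg u)
      _ ≤ ENNReal.ofReal (2 * ((1 + 0) ^ (1 - p) / (p - 1))) := tail_abs hp1 le_rfl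
      _ ≤ ENNReal.ofReal ((2 * (1 / (p - 1))) * (1 + T) ^ m) := by
          apply ENNReal.ofReal_le_ofReal
          have h1 : (1:ℝ) ≤ (1 + T) ^ m := Real.one_le_rpow (by linarith) hm0
          have h2 : (0:ℝ) < 1 / (p - 1) := one_div_pos.mpr (by linarith)
          have h3 : ((1:ℝ) + 0) ^ (1 - p) = 1 := by norm_num
          rw [h3]
          nlinarith
  · refine ⟨2 * (1 / m), mul_pos two_pos (one_div_pos.mpr hm), ?_⟩
    intro T hT
    calc ∫⁻ u in {u : ℝ | |u| ≤ T}, ENNReal.ofReal ((1 + |u|) ^ (-p))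
        ≤ ∫⁻ u in {u : ℝ | |u| ≤ T}, ENNReal.ofReal ((1 + |u|) ^ (m - 1)) := by
          apply setLIntegral_mono (by simpa using measAux 0 (m - 1))
          intro u _
          apply ENNReal.ofReal_le_ofReal
          exact rpow_le_rpow_of_exponent_le (by linarith [abs_nonneg u]) (by linarith)
      _ ≤ ENNReal.ofReal (2 * ((1 + T) ^ (m - 1 + 1) / (m - 1 + 1))) :=
          bulk_abs (by linarith) hT
      _ ≤ ENNReal.ofReal ((2 * (1 / m)) * (1 + T) ^ m) := by
          apply ENNReal.ofReal_le_ofReal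
          rw [show m - 1 + 1 = m by ring]
          apply le_of_eq; ring

private lemma prod_le_sum {a b p q : ℝ} (ha : 1 ≤ a) (hb : 1 ≤ b) (hp : 0 ≤ p) (hq : 0 ≤ q) :
    a ^ (-p) * b ^ (-q) ≤ a ^ (-(p + q)) + b ^ (-(p + q)) := by
  rcases le_total a b with h | h
  · have h1 : b ^ (-q) ≤ a ^ (-q) := rpow_le_rpow_of_nonpos (by linarith) h (by linarith)
    have h2 : a ^ (-p) * b ^ (-q) ≤ a ^ (-p) * a ^ (-q) :=
      mul_le_mul_of_nonneg_left h1 (rpow_nonneg (by linarith) _)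
    have h3 : a ^ (-p) * a ^ (-q) = a ^ (-(p + q)) := by
      rw [← Real.rpow_add (by linarith), neg_add]
    have h4 : (0:ℝ) ≤ b ^ (-(p + q)) := rpow_nonneg (by linarith) _
    linarith [h2, h3.le, h3.ge]
  · have h1 : a ^ (-p) ≤ b ^ (-p) := rpow_le_rpow_of_nonpos (by linarith) h (by linarith)
    have h2 : a ^ (-p) * b ^ (-q) ≤ b ^ (-p) * b ^ (-q) :=
      mul_le_mul_of_nonneg_right h1 (rpow_nonneg (by linarith) _)
    have h3 : b ^ (-p) * b ^ (-q) = b ^ (-(p + q)) := by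
      rw [← Real.rpow_add (by linarith), neg_add]
    have h4 : (0:ℝ) ≤ a ^ (-(p + q)) := rpow_nonneg (by linarith) _
    linarith [h2, h3.le, h3.ge]

private lemma regionA (p q Kp mp : ℝ) (hq : 0 < q) (hKp : 0 < Kp) (hmp0 : 0 ≤ mp)
    (hKpb : ∀ T : ℝ, 0 ≤ T →
      ∫⁻ u in {u : ℝ | |u| ≤ T}, ENNReal.ofReal ((1 + |u|) ^ (-p)) ≤
        ENNReal.ofReal (Kp * (1 + T) ^ mp))
    (α β : ℝ) :
    ∫⁻ x in {x : ℝ | |x - α| ≤ |α - β| / 2},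
        ENNReal.ofReal ((1 + |x - α|) ^ (-p) * (1 + |x - β|) ^ (-q)) ≤
      ENNReal.ofReal ((2 ^ q * Kp) * (1 + |α - β|) ^ (mp - q)) := by
  set d : ℝ := |α - β| with hd
  have hd0 : 0 ≤ d := abs_nonneg _
  set D : ℝ := 1 + d with hDdef
  have hD1 : 1 ≤ D := by simp only [hDdef]; linarith
  have hD0 : 0 < D := by linarith
  have hhalf0 : 0 ≤ d / 2 := by linarith
  have hb : ∀ x : ℝ, |x - α| ≤ d / 2 → (1 + |x - β|) ^ (-q) ≤ 2 ^ q * D ^ (-q) := by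
    intro x hx
    have htri : d ≤ |x - α| + |x - β| := by
      have h1 : |α - β| ≤ |α - x| + |x - β| := abs_sub_le α x β
      have h2 : |α - x| = |x - α| := abs_sub_comm α x
      rw [hd]; linarith
    have h2 : D / 2 ≤ 1 + |x - β| := by simp only [hDdef]; linarith
    calc (1 + |x - β|) ^ (-q) ≤ (D / 2) ^ (-q) :=
          rpow_le_rpow_of_nonpos (by linarith) h2 (by linarith)
      _ = 2 ^ q * D ^ (-q) := by
          rw [div_eq_mul_inv, Real.mul_rpow hD0.le (by norm_num : (0:ℝ) ≤ 2⁻¹),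
            two_inv_rpow, mul_comm]
  have hcnn : (0:ℝ) ≤ 2 ^ q * D ^ (-q) :=
    mul_nonneg (rpow_nonneg (by norm_num) _) (rpow_nonneg hD0.le _)
  calc ∫⁻ x in {x : ℝ | |x - α| ≤ d / 2},
        ENNReal.ofReal ((1 + |x - α|) ^ (-p) * (1 + |x - β|) ^ (-q))
      ≤ ∫⁻ x in {x : ℝ | |x - α| ≤ d / 2},
          ENNReal.ofReal ((2 ^ q * D ^ (-q)) * (1 + |x - α|) ^ (-p)) := by
        apply setLIntegral_mono (measAux2 α (2 ^ q * D ^ (-q)) (-p))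
        intro x hx
        apply ENNReal.ofReal_le_ofReal
        have hnn : 0 ≤ (1 + |x - α|) ^ (-p) := rpow_nonneg (by positivity) _
        calc (1 + |x - α|) ^ (-p) * (1 + |x - β|) ^ (-q)
            ≤ (1 + |x - α|) ^ (-p) * (2 ^ q * D ^ (-q)) :=
              mul_le_mul_of_nonneg_left (hb x hx) hnn
          _ = (2 ^ q * D ^ (-q)) * (1 + |x - α|) ^ (-p) := mul_comm _ _
    _ = ENNReal.ofReal (2 ^ q * D ^ (-q)) *
          ∫⁻ x in {x : ℝ | |x - α| ≤ d / 2}, ENNReal.ofReal ((1 + |x - α|) ^ (-p)) := by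
        simp_rw [ENNReal.ofReal_mul hcnn]
        exact lintegral_const_mul' _ _ ENNReal.ofReal_ne_top
    _ = ENNReal.ofReal (2 ^ q * D ^ (-q)) *
          ∫⁻ u in {u : ℝ | |u| ≤ d / 2}, ENNReal.ofReal ((1 + |u|) ^ (-p)) := by
        congr 1
        exact shift_lintegral {u : ℝ | |u| ≤ d / 2}
          (fun u => ENNReal.ofReal ((1 + |u|) ^ (-p))) α
    _ ≤ ENNReal.ofReal (2 ^ q * D ^ (-q)) * ENNReal.ofReal (Kp * (1 + d / 2) ^ mp) :=
        mul_le_mul_right (hKpb _ hhalf0) _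
    _ ≤ ENNReal.ofReal ((2 ^ q * Kp) * D ^ (mp - q)) := by
        rw [← ENNReal.ofReal_mul hcnn]
        apply ENNReal.ofReal_le_ofReal
        have e1 : (1 + d / 2) ^ mp ≤ D ^ mp :=
          rpow_le_rpow (by linarith) (by simp only [hDdef]; linarith) hmp0
        have e2 : D ^ (mp - q) = D ^ (-q) * D ^ mp := by
          rw [show mp - q = -q + mp by ring, Real.rpow_add hD0]
        calc 2 ^ q * D ^ (-q) * (Kp * (1 + d / 2) ^ mp)
            ≤ 2 ^ q * D ^ (-q) * (Kp * D ^ mp) := by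
              apply mul_le_mul_of_nonneg_left (mul_le_mul_of_nonneg_left e1 hKp.le) hcnn
          _ = 2 ^ q * Kp * (D ^ (-q) * D ^ mp) := by ring
          _ = 2 ^ q * Kp * D ^ (mp - q) := by rw [← e2]

private lemma regionTail (r : ℝ) (hr : 1 < r) (α β : ℝ) :
    ∫⁻ x in {x : ℝ | |α - β| / 2 ≤ |x - α|}, ENNReal.ofReal ((1 + |x - α|) ^ (-r)) ≤
      ENNReal.ofReal ((2 * 2 ^ (r - 1) / (r - 1)) * (1 + |α - β|) ^ (1 - r)) := by
  set d : ℝ := |α - β| with hd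
  have hd0 : 0 ≤ d := abs_nonneg _
  set D : ℝ := 1 + d with hDdef
  have hD1 : 1 ≤ D := by simp only [hDdef]; linarith
  have hD0 : 0 < D := by linarith
  have hhalf0 : 0 ≤ d / 2 := by linarith
  calc ∫⁻ x in {x : ℝ | d / 2 ≤ |x - α|}, ENNReal.ofReal ((1 + |x - α|) ^ (-r))
      = ∫⁻ u in {u : ℝ | d / 2 ≤ |u|}, ENNReal.ofReal ((1 + |u|) ^ (-r)) :=
        shift_lintegral {u : ℝ | d / 2 ≤ |u|}
          (fun u => ENNReal.ofReal ((1 + |u|) ^ (-r))) α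
    _ ≤ ENNReal.ofReal (2 * ((1 + d / 2) ^ (1 - r) / (r - 1))) := tail_abs hr hhalf0
    _ ≤ ENNReal.ofReal ((2 * 2 ^ (r - 1) / (r - 1)) * D ^ (1 - r)) := by
        apply ENNReal.ofReal_le_ofReal
        have e1 : (1 + d / 2) ^ (1 - r) ≤ (D / 2) ^ (1 - r) := by
          apply rpow_le_rpow_of_nonpos (by linarith) (by simp only [hDdef]; linarith)
            (by linarith)
        have e2 : (D / 2) ^ (1 - r) = 2 ^ (r - 1) * D ^ (1 - r) := by
          rw [show (1:ℝ) - r = -(r - 1) by ring, div_eq_mul_inv,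
            Real.mul_rpow hD0.le (by norm_num : (0:ℝ) ≤ 2⁻¹), two_inv_rpow, mul_comm]
        have e3 : (1 + d / 2) ^ (1 - r) ≤ 2 ^ (r - 1) * D ^ (1 - r) := by
          rw [← e2]; exact e1
        have h4 : (0:ℝ) < r - 1 := by linarith
        calc 2 * ((1 + d / 2) ^ (1 - r) / (r - 1))
            = 2 * (1 + d / 2) ^ (1 - r) / (r - 1) := by ring
          _ ≤ 2 * (2 ^ (r - 1) * D ^ (1 - r)) / (r - 1) :=
              (div_le_div_iff_of_pos_right h4).mpr (by linarith)
          _ = 2 * 2 ^ (r - 1) / (r - 1) * D ^ (1 - r) := by ring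

/-- Fix `p, q > 0` with `p + q > 1` and `ε > 0`. With `ε_q = ε` if `q = 1`
and `ε_q = 0` otherwise (similarly `ε_p`), and `ρ = min {p - ε_q, q - ε_p, p + q - 1}`, there
is `C = C(p,q,ε) > 0` such that for all `α, β ∈ ℝ`,
`∫_ℝ (1+|x-α|)^{-p} (1+|x-β|)^{-q} dx ≤ C (1+|α-β|)^{-ρ}`. -/
theorem kernel_convolution_decay (p q ε : ℝ) (hp : 0 < p) (hq : 0 < q)
    (hpq : 1 < p + q) (hε : 0 < ε) :
    ∃ C : ℝ, 0 < C ∧ ∀ α β : ℝ,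
      (∫⁻ x : ℝ, ENNReal.ofReal ((1 + |x - α|) ^ (-p) * (1 + |x - β|) ^ (-q))) ≤
        ENNReal.ofReal (C * (1 + |α - β|) ^
          (-(min (min (p - (if q = 1 then ε else 0)) (q - (if p = 1 then ε else 0)))
            (p + q - 1)))) := by
  set ρ : ℝ := min (min (p - (if q = 1 then ε else 0)) (q - (if p = 1 then ε else 0)))
    (p + q - 1) with hρdef
  have hρpq : ρ ≤ p + q - 1 := min_le_right _ _
  have hρp : ρ ≤ p - (if q = 1 then ε else 0) := (min_le_left _ _).trans (min_le_left _ _)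
  have hρq : ρ ≤ q - (if p = 1 then ε else 0) := (min_le_left _ _).trans (min_le_right _ _)
  obtain ⟨mp, hmp0, hmp1, hmpc, hmpρ⟩ :
      ∃ m : ℝ, 0 ≤ m ∧ 1 - p ≤ m ∧ (1 < p ∨ 0 < m) ∧ ρ ≤ q - m := by
    rcases lt_trichotomy p 1 with h | h | h
    · exact ⟨1 - p, by linarith, le_refl _, Or.inr (by linarith), by linarith⟩
    · refine ⟨ε, hε.le, by linarith, Or.inr hε, ?_⟩
      rw [if_pos h] at hρq; linarith
    · refine ⟨0, le_rfl, by linarith, Or.inl h, ?_⟩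
      rw [if_neg (by linarith : p ≠ 1)] at hρq; linarith
  obtain ⟨mq, hmq0, hmq1, hmqc, hmqρ⟩ :
      ∃ m : ℝ, 0 ≤ m ∧ 1 - q ≤ m ∧ (1 < q ∨ 0 < m) ∧ ρ ≤ p - m := by
    rcases lt_trichotomy q 1 with h | h | h
    · exact ⟨1 - q, by linarith, le_refl _, Or.inr (by linarith), by linarith⟩
    · refine ⟨ε, hε.le, by linarith, Or.inr hε, ?_⟩
      rw [if_pos h] at hρp; linarith
    · refine ⟨0, le_rfl, by linarith, Or.inl h, ?_⟩
      rw [if_neg (by linarith : q ≠ 1)] at hρp; linarith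
  obtain ⟨Kp, hKp, hKpb⟩ := bulkBound p mp hp hmp0 hmp1 hmpc
  obtain ⟨Kq, hKq, hKqb⟩ := bulkBound q mq hq hmq0 hmq1 hmqc
  have h2q : (0:ℝ) < 2 ^ q := rpow_pos_of_pos (by norm_num) _
  have h2p : (0:ℝ) < 2 ^ p := rpow_pos_of_pos (by norm_num) _
  set Kt : ℝ := 2 * 2 ^ (p + q - 1) / (p + q - 1) with hKtdef
  have hKt : (0:ℝ) < Kt := div_pos (by positivity) (by linarith)
  refine ⟨2 ^ q * Kp + 2 ^ p * Kq + (Kt + Kt), by nlinarith, ?_⟩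
  intro α β
  set d : ℝ := |α - β| with hd
  have hd0 : 0 ≤ d := abs_nonneg _
  have hD1 : (1:ℝ) ≤ 1 + d := by linarith
  have hD0 : (0:ℝ) < 1 + d := by linarith
  have hhalf0 : 0 ≤ d / 2 := by linarith
  have hX : (0:ℝ) ≤ (1 + d) ^ (-ρ) := rpow_nonneg hD0.le _
  have hA : ∫⁻ x in {x : ℝ | |x - α| ≤ d / 2},
        ENNReal.ofReal ((1 + |x - α|) ^ (-p) * (1 + |x - β|) ^ (-q))
      ≤ ENNReal.ofReal ((2 ^ q * Kp) * (1 + d) ^ (-ρ)) := by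
    refine (regionA p q Kp mp hq hKp hmp0 hKpb α β).trans ?_
    apply ENNReal.ofReal_le_ofReal
    exact mul_le_mul_of_nonneg_left (rpow_le_rpow_of_exponent_le hD1 (by linarith))
      (mul_nonneg h2q.le hKp.le)
  have hB : ∫⁻ x in {x : ℝ | |x - β| ≤ d / 2},
        ENNReal.ofReal ((1 + |x - α|) ^ (-p) * (1 + |x - β|) ^ (-q))
      ≤ ENNReal.ofReal ((2 ^ p * Kq) * (1 + d) ^ (-ρ)) := by
    have hcomm : ∫⁻ x in {x : ℝ | |x - β| ≤ d / 2},
          ENNReal.ofReal ((1 + |x - α|) ^ (-p) * (1 + |x - β|) ^ (-q))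
        = ∫⁻ x in {x : ℝ | |x - β| ≤ |β - α| / 2},
            ENNReal.ofReal ((1 + |x - β|) ^ (-q) * (1 + |x - α|) ^ (-p)) := by
      rw [abs_sub_comm β α]
      exact lintegral_congr (fun x => by rw [mul_comm])
    rw [hcomm]
    refine (regionA q p Kq mq hp hKq hmq0 hKqb β α).trans ?_
    apply ENNReal.ofReal_le_ofReal
    rw [abs_sub_comm β α]
    exact mul_le_mul_of_nonneg_left (rpow_le_rpow_of_exponent_le hD1 (by linarith))
      (mul_nonneg h2p.le hKq.le)
  have hsum : ∀ x : ℝ, ENNReal.ofReal ((1 + |x - α|) ^ (-p) * (1 + |x - β|) ^ (-q))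
      ≤ ENNReal.ofReal ((1 + |x - α|) ^ (-(p + q)))
        + ENNReal.ofReal ((1 + |x - β|) ^ (-(p + q))) := fun x =>
    (ENNReal.ofReal_le_ofReal (prod_le_sum (by linarith [abs_nonneg (x - α)])
      (by linarith [abs_nonneg (x - β)]) hp.le hq.le)).trans ENNReal.ofReal_add_le
  have hC : ∫⁻ x in {x : ℝ | d / 2 ≤ |x - α|} ∩ {x : ℝ | d / 2 ≤ |x - β|},
        ENNReal.ofReal ((1 + |x - α|) ^ (-p) * (1 + |x - β|) ^ (-q))
      ≤ ENNReal.ofReal (Kt * (1 + d) ^ (-ρ)) + ENNReal.ofReal (Kt * (1 + d) ^ (-ρ)) := by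
    have ht1 : ∫⁻ x in {x : ℝ | d / 2 ≤ |x - α|},
          ENNReal.ofReal ((1 + |x - α|) ^ (-(p + q)))
        ≤ ENNReal.ofReal (Kt * (1 + d) ^ (-ρ)) := by
      refine (regionTail (p + q) hpq α β).trans (ENNReal.ofReal_le_ofReal ?_)
      exact mul_le_mul_of_nonneg_left
        (rpow_le_rpow_of_exponent_le hD1 (by linarith)) hKt.le
    have ht2 : ∫⁻ x in {x : ℝ | d / 2 ≤ |x - β|},
          ENNReal.ofReal ((1 + |x - β|) ^ (-(p + q)))
        ≤ ENNReal.ofReal (Kt * (1 + d) ^ (-ρ)) := by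
      have h := regionTail (p + q) hpq β α
      rw [abs_sub_comm β α] at h
      refine h.trans (ENNReal.ofReal_le_ofReal ?_)
      exact mul_le_mul_of_nonneg_left
        (rpow_le_rpow_of_exponent_le hD1 (by linarith)) hKt.le
    calc ∫⁻ x in {x : ℝ | d / 2 ≤ |x - α|} ∩ {x : ℝ | d / 2 ≤ |x - β|},
          ENNReal.ofReal ((1 + |x - α|) ^ (-p) * (1 + |x - β|) ^ (-q))
        ≤ ∫⁻ x in {x : ℝ | d / 2 ≤ |x - α|} ∩ {x : ℝ | d / 2 ≤ |x - β|},
            (ENNReal.ofReal ((1 + |x - α|) ^ (-(p + q)))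
              + ENNReal.ofReal ((1 + |x - β|) ^ (-(p + q)))) :=
          setLIntegral_mono ((measAux α (-(p + q))).add (measAux β (-(p + q))))
            (fun x _ => hsum x)
      _ = (∫⁻ x in {x : ℝ | d / 2 ≤ |x - α|} ∩ {x : ℝ | d / 2 ≤ |x - β|},
            ENNReal.ofReal ((1 + |x - α|) ^ (-(p + q))))
          + ∫⁻ x in {x : ℝ | d / 2 ≤ |x - α|} ∩ {x : ℝ | d / 2 ≤ |x - β|},
            ENNReal.ofReal ((1 + |x - β|) ^ (-(p + q))) :=
          lintegral_add_left (measAux α (-(p + q))) _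
      _ ≤ (∫⁻ x in {x : ℝ | d / 2 ≤ |x - α|},
            ENNReal.ofReal ((1 + |x - α|) ^ (-(p + q))))
          + ∫⁻ x in {x : ℝ | d / 2 ≤ |x - β|},
            ENNReal.ofReal ((1 + |x - β|) ^ (-(p + q))) :=
          add_le_add (lintegral_mono_set inter_subset_left)
            (lintegral_mono_set inter_subset_right)
      _ ≤ _ := add_le_add ht1 ht2
  have hcover : (univ : Set ℝ) ⊆ {x : ℝ | |x - α| ≤ d / 2} ∪ ({x : ℝ | |x - β| ≤ d / 2}
      ∪ ({x : ℝ | d / 2 ≤ |x - α|} ∩ {x : ℝ | d / 2 ≤ |x - β|})) := by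
    intro x _
    by_cases h1 : |x - α| ≤ d / 2
    · exact mem_union_left _ h1
    · by_cases h2 : |x - β| ≤ d / 2
      · exact mem_union_right _ (mem_union_left _ h2)
      · exact mem_union_right _ (mem_union_right _ ⟨le_of_not_ge h1, le_of_not_ge h2⟩)
  have hfin : ENNReal.ofReal ((2 ^ q * Kp) * (1 + d) ^ (-ρ))
      + (ENNReal.ofReal ((2 ^ p * Kq) * (1 + d) ^ (-ρ))
        + (ENNReal.ofReal (Kt * (1 + d) ^ (-ρ)) + ENNReal.ofReal (Kt * (1 + d) ^ (-ρ))))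
      = ENNReal.ofReal ((2 ^ q * Kp + 2 ^ p * Kq + (Kt + Kt)) * (1 + d) ^ (-ρ)) := by
    rw [← ENNReal.ofReal_add (mul_nonneg hKt.le hX) (mul_nonneg hKt.le hX),
      ← ENNReal.ofReal_add (mul_nonneg (mul_nonneg h2p.le hKq.le) hX)
        (by positivity),
      ← ENNReal.ofReal_add (mul_nonneg (mul_nonneg h2q.le hKp.le) hX)
        (by positivity)]
    congr 1
    ring
  calc ∫⁻ x : ℝ, ENNReal.ofReal ((1 + |x - α|) ^ (-p) * (1 + |x - β|) ^ (-q))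
      = ∫⁻ x in univ, ENNReal.ofReal ((1 + |x - α|) ^ (-p) * (1 + |x - β|) ^ (-q)) :=
        (setLIntegral_univ _).symm
    _ ≤ ∫⁻ x in {x : ℝ | |x - α| ≤ d / 2} ∪ ({x : ℝ | |x - β| ≤ d / 2}
          ∪ ({x : ℝ | d / 2 ≤ |x - α|} ∩ {x : ℝ | d / 2 ≤ |x - β|})),
          ENNReal.ofReal ((1 + |x - α|) ^ (-p) * (1 + |x - β|) ^ (-q)) :=
        lintegral_mono_set hcover
    _ ≤ (∫⁻ x in {x : ℝ | |x - α| ≤ d / 2},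
          ENNReal.ofReal ((1 + |x - α|) ^ (-p) * (1 + |x - β|) ^ (-q)))
        + ∫⁻ x in {x : ℝ | |x - β| ≤ d / 2} ∪ ({x : ℝ | d / 2 ≤ |x - α|}
            ∩ {x : ℝ | d / 2 ≤ |x - β|}),
          ENNReal.ofReal ((1 + |x - α|) ^ (-p) * (1 + |x - β|) ^ (-q)) :=
        lintegral_union_le _ _ _
    _ ≤ (∫⁻ x in {x : ℝ | |x - α| ≤ d / 2},
          ENNReal.ofReal ((1 + |x - α|) ^ (-p) * (1 + |x - β|) ^ (-q)))
        + ((∫⁻ x in {x : ℝ | |x - β| ≤ d / 2},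
            ENNReal.ofReal ((1 + |x - α|) ^ (-p) * (1 + |x - β|) ^ (-q)))
          + ∫⁻ x in {x : ℝ | d / 2 ≤ |x - α|} ∩ {x : ℝ | d / 2 ≤ |x - β|},
            ENNReal.ofReal ((1 + |x - α|) ^ (-p) * (1 + |x - β|) ^ (-q))) :=
        add_le_add_right (lintegral_union_le _ _ _) _
    _ ≤ ENNReal.ofReal ((2 ^ q * Kp) * (1 + d) ^ (-ρ))
        + (ENNReal.ofReal ((2 ^ p * Kq) * (1 + d) ^ (-ρ))
          + (ENNReal.ofReal (Kt * (1 + d) ^ (-ρ)) + ENNReal.ofReal (Kt * (1 + d) ^ (-ρ)))) :=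
        add_le_add hA (add_le_add hB hC)
    _ = ENNReal.ofReal ((2 ^ q * Kp + 2 ^ p * Kq + (Kt + Kt)) * (1 + d) ^ (-ρ)) := hfin
end

section
/- Let p, q > 0 with p + q > 1. Then there exists a constant C = C(p, q) > 0 such that for every a ≥ 0, ∫_{|x| ≥ 2a} (1+|a+x|)^{−p} (1+|a−x|)^{−q} dx ≤ C (1+a)^{1−p−q}, where the integral is over the set {x ∈ ℝ : |x| ≥ 2a}. -/
open MeasureTheory Set
open scoped ENNReal

private lemma aux_Ioi (r : ℝ) (hr : 1 < r) (c : ℝ) (hc : 0 < c) :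
    ∫⁻ x in Ici c, ENNReal.ofReal (x ^ (-r)) = ENNReal.ofReal (c ^ (1 - r) / (r - 1)) := by
  rw [← MeasureTheory.Measure.restrict_congr_set MeasureTheory.Ioi_ae_eq_Ici]
  have hint : IntegrableOn (fun x : ℝ => x ^ (-r)) (Ioi c) :=
    integrableOn_Ioi_rpow_of_lt (by linarith) hc
  have hnn : 0 ≤ᵐ[volume.restrict (Ioi c)] fun x : ℝ => x ^ (-r) := by
    filter_upwards [MeasureTheory.self_mem_ae_restrict measurableSet_Ioi] with x hx
    exact Real.rpow_nonneg (le_of_lt (hc.trans hx)) _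
  rw [← MeasureTheory.ofReal_integral_eq_lintegral_ofReal hint hnn]
  congr 1
  rw [integral_Ioi_rpow_of_lt (by linarith) hc]
  rw [show -r + 1 = 1 - r by ring]
  have h1 : (1:ℝ) - r ≠ 0 := by linarith
  have h2 : r - 1 ≠ 0 := by linarith
  field_simp
  ring

private lemma aux_ray (r : ℝ) (hr : 1 < r) (c : ℝ) (hc : 0 ≤ c) :
    ∫⁻ x in Ici c, ENNReal.ofReal ((1 + |x|) ^ (-r)) =
      ENNReal.ofReal ((1 + c) ^ (1 - r) / (r - 1)) := by
  have h1 : ∫⁻ x in Ici c, ENNReal.ofReal ((1 + |x|) ^ (-r)) =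
      ∫⁻ x in Ici c, ENNReal.ofReal ((1 + x) ^ (-r)) := by
    refine setLIntegral_congr_fun measurableSet_Ici ?_
    intro x hx
    beta_reduce
    rw [abs_of_nonneg (hc.trans hx)]
  have h2 : ∫⁻ x in Ici c, ENNReal.ofReal ((1 + x) ^ (-r)) =
      ∫⁻ y in Ici (1 + c), ENNReal.ofReal (y ^ (-r)) := by
    have hmp : MeasurePreserving (fun x : ℝ => x + 1) volume volume :=
      measurePreserving_add_right volume 1
    have hemb : MeasurableEmbedding (fun x : ℝ => x + 1) :=
      (MeasurableEquiv.addRight (1 : ℝ)).measurableEmbedding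
    have := hmp.setLIntegral_comp_preimage_emb hemb
      (fun y => ENNReal.ofReal (y ^ (-r))) (Ici (1 + c))
    rw [← this]
    have hpre : (fun x : ℝ => x + 1) ⁻¹' Ici (1 + c) = Ici c := by
      ext x; simp only [mem_preimage, mem_Ici]; constructor <;> intro h <;> linarith
    rw [hpre]
    refine setLIntegral_congr_fun measurableSet_Ici ?_
    intro x hx
    beta_reduce
    rw [add_comm x 1]
  rw [h1, h2, aux_Ioi r hr (1 + c) (by linarith)]

/-- For `p, q > 0` with `p + q > 1`, there is `C = C(p,q) > 0` such that for
every `a ≥ 0`, `∫_{|x| ≥ 2a} (1+|a+x|)^{-p} (1+|a-x|)^{-q} dx ≤ C (1+a)^{1-p-q}`. -/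
theorem kernel_tail_integral_estimate (p q : ℝ) (hp : 0 < p) (hq : 0 < q) (hpq : 1 < p + q) :
    ∃ C : ℝ, 0 < C ∧ ∀ a : ℝ, 0 ≤ a →
      (∫⁻ x in {x : ℝ | 2 * a ≤ |x|},
          ENNReal.ofReal ((1 + |a + x|) ^ (-p) * (1 + |a - x|) ^ (-q))) ≤
        ENNReal.ofReal (C * (1 + a) ^ (1 - p - q)) := by
  set r := p + q with hr
  have hr1 : 1 < r := hpq
  have hrpos : (0 : ℝ) < r - 1 := by linarith
  refine ⟨2 * 2 ^ r / (r - 1), by positivity, ?_⟩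
  intro a ha
  -- Pointwise bound on the set
  have key : ∀ x ∈ {x : ℝ | 2 * a ≤ |x|},
      ENNReal.ofReal ((1 + |a + x|) ^ (-p) * (1 + |a - x|) ^ (-q)) ≤
      ENNReal.ofReal (2 ^ r * (1 + |x|) ^ (-r)) := by
    intro x hx
    simp only [mem_setOf_eq] at hx
    apply ENNReal.ofReal_le_ofReal
    have hax : 0 ≤ |x| := abs_nonneg x
    have h2a : 2 * a ≤ |x| := hx
    have hmid : (0 : ℝ) < 1 + |x| - a := by linarith
    have hb1 : 1 + |x| - a ≤ 1 + |a + x| := by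
      have : |x| - a ≤ |a + x| := by
        have := abs_sub_abs_le_abs_sub x (-a)
        simp only [sub_neg_eq_add, abs_neg, abs_of_nonneg ha] at this
        rw [add_comm]
        linarith [this]
      linarith
    have hb2 : 1 + |x| - a ≤ 1 + |a - x| := by
      have : |x| - a ≤ |a - x| := by
        have := abs_sub_abs_le_abs_sub x a
        rw [abs_sub_comm, abs_of_nonneg ha] at this
        linarith
      linarith
    have e1 : (1 + |a + x|) ^ (-p) ≤ (1 + |x| - a) ^ (-p) :=
      Real.rpow_le_rpow_of_nonpos hmid hb1 (by linarith)
    have e2 : (1 + |a - x|) ^ (-q) ≤ (1 + |x| - a) ^ (-q) :=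
      Real.rpow_le_rpow_of_nonpos hmid hb2 (by linarith)
    have hmul : (1 + |a + x|) ^ (-p) * (1 + |a - x|) ^ (-q) ≤
        (1 + |x| - a) ^ (-p) * (1 + |x| - a) ^ (-q) := by
      apply mul_le_mul e1 e2 (Real.rpow_nonneg (by positivity) _)
        (Real.rpow_nonneg hmid.le _)
    rw [← Real.rpow_add hmid] at hmul
    have hhalf : (1 + |x|) / 2 ≤ 1 + |x| - a := by linarith
    have e3 : (1 + |x| - a) ^ (-(p + q)) ≤ ((1 + |x|) / 2) ^ (-(p + q)) :=
      Real.rpow_le_rpow_of_nonpos (by positivity) hhalf (by linarith)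
    have e4 : ((1 + |x|) / 2) ^ (-(p + q)) = 2 ^ r * (1 + |x|) ^ (-r) := by
      rw [Real.div_rpow (by positivity) (by norm_num)]
      rw [Real.rpow_neg (by positivity), Real.rpow_neg (by norm_num : (0:ℝ) ≤ 2)]
      rw [div_eq_mul_inv, inv_inv, hr]
      ring
    calc (1 + |a + x|) ^ (-p) * (1 + |a - x|) ^ (-q)
        ≤ (1 + |x| - a) ^ (-p + -q) := hmul
      _ = (1 + |x| - a) ^ (-(p + q)) := by ring_nf
      _ ≤ ((1 + |x|) / 2) ^ (-(p + q)) := e3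
      _ = 2 ^ r * (1 + |x|) ^ (-r) := e4
  have hset : {x : ℝ | 2 * a ≤ |x|} = Iic (-(2 * a)) ∪ Ici (2 * a) := by
    ext x
    simp only [mem_setOf_eq, mem_union, mem_Iic, mem_Ici, le_abs]
    constructor
    · rintro (h | h)
      · right; exact h
      · left; linarith
    · rintro (h | h)
      · right; linarith
      · left; exact h
  -- Bound for the negative ray via reflection
  have hneg : ∫⁻ x in Iic (-(2 * a)), ENNReal.ofReal (2 ^ r * (1 + |x|) ^ (-r)) =
      ∫⁻ x in Ici (2 * a), ENNReal.ofReal (2 ^ r * (1 + |x|) ^ (-r)) := by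
    have hmp : MeasurePreserving (fun x : ℝ => -x) volume volume :=
      Measure.measurePreserving_neg volume
    have hemb : MeasurableEmbedding (fun x : ℝ => -x) :=
      (MeasurableEquiv.neg ℝ).measurableEmbedding
    have := hmp.setLIntegral_comp_preimage_emb hemb
      (fun y => ENNReal.ofReal (2 ^ r * (1 + |y|) ^ (-r))) (Ici (2 * a))
    have hpre : (fun x : ℝ => -x) ⁻¹' Ici (2 * a) = Iic (-(2 * a)) := by
      ext x; simp only [mem_preimage, mem_Ici, mem_Iic]
      constructor <;> intro h <;> linarith
    rw [hpre] at this
    rw [← this]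
    refine setLIntegral_congr_fun measurableSet_Iic ?_
    intro x hx
    beta_reduce
    rw [abs_neg]
  have hray : ∫⁻ x in Ici (2 * a), ENNReal.ofReal (2 ^ r * (1 + |x|) ^ (-r)) ≤
      ENNReal.ofReal (2 ^ r * ((1 + a) ^ (1 - r) / (r - 1))) := by
    have : ∫⁻ x in Ici (2 * a), ENNReal.ofReal (2 ^ r * (1 + |x|) ^ (-r)) =
        ENNReal.ofReal (2 ^ r) * ∫⁻ x in Ici (2 * a), ENNReal.ofReal ((1 + |x|) ^ (-r)) := by
      rw [← lintegral_const_mul' _ _ (by simp)]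
      congr 1; ext x
      rw [ENNReal.ofReal_mul (by positivity)]
    rw [this, aux_ray r hr1 (2 * a) (by linarith)]
    rw [← ENNReal.ofReal_mul (by positivity)]
    apply ENNReal.ofReal_le_ofReal
    have h12 : (1 + 2 * a) ^ (1 - r) ≤ (1 + a) ^ (1 - r) :=
      Real.rpow_le_rpow_of_nonpos (by linarith) (by linarith) (by linarith)
    apply mul_le_mul_of_nonneg_left _ (by positivity : (0:ℝ) ≤ 2 ^ r)
    rw [div_eq_mul_inv, div_eq_mul_inv]
    exact mul_le_mul_of_nonneg_right h12 (by positivity)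
  calc (∫⁻ x in {x : ℝ | 2 * a ≤ |x|},
          ENNReal.ofReal ((1 + |a + x|) ^ (-p) * (1 + |a - x|) ^ (-q)))
      ≤ ∫⁻ x in {x : ℝ | 2 * a ≤ |x|}, ENNReal.ofReal (2 ^ r * (1 + |x|) ^ (-r)) := by
        have hmeas : MeasurableSet {x : ℝ | 2 * a ≤ |x|} := by
          rw [hset]; exact measurableSet_Iic.union measurableSet_Ici
        exact setLIntegral_mono' hmeas key
    _ ≤ (∫⁻ x in Iic (-(2 * a)), ENNReal.ofReal (2 ^ r * (1 + |x|) ^ (-r))) +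
        ∫⁻ x in Ici (2 * a), ENNReal.ofReal (2 ^ r * (1 + |x|) ^ (-r)) := by
        rw [hset]; exact lintegral_union_le _ _ _
    _ ≤ ENNReal.ofReal (2 ^ r * ((1 + a) ^ (1 - r) / (r - 1))) +
        ENNReal.ofReal (2 ^ r * ((1 + a) ^ (1 - r) / (r - 1))) := by
        rw [hneg]; exact add_le_add hray hray
    _ ≤ ENNReal.ofReal (2 * 2 ^ r / (r - 1) * (1 + a) ^ (1 - p - q)) := by
        rw [← ENNReal.ofReal_add (by positivity) (by positivity)]
        apply ENNReal.ofReal_le_ofReal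
        have : 1 - p - q = 1 - r := by rw [hr]; ring
        rw [this]
        rw [show 2 * 2 ^ r / (r - 1) * (1 + a) ^ (1 - r)
            = 2 ^ r * ((1 + a) ^ (1 - r) / (r - 1)) + 2 ^ r * ((1 + a) ^ (1 - r) / (r - 1)) by
          field_simp; ring]
end

section
/- Let p, q > 0 and fix ε > 0. Set m = min{p, p + q − 1} if q ≠ 1 and m = p − ε if q = 1. Then there exists a constant C = C(p, q, ε) > 0 such that for every a > 0, ∫_0^{2a} (1+|a+x|)^{−p} (1+|a−x|)^{−q} dx ≤ C (1+a)^{−m}. -/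
open MeasureTheory
open scoped ENNReal

lemma aux_kernel_int (q ε : ℝ) (hq : 0 < q) (hε : 0 < ε) :
    ∃ K : ℝ, 0 < K ∧ ∀ a : ℝ, 0 < a →
      (∫ t in (0:ℝ)..a, (1 + t) ^ (-q)) ≤
        K * (1 + a) ^ (if q = 1 then ε else max 0 (1 - q)) := by
  by_cases hq1 : q = 1
  · refine ⟨1 / ε, by positivity, ?_⟩
    intro a ha
    have ha1 : (0:ℝ) < 1 + a := by linarith
    have hval : (∫ t in (0:ℝ)..a, (1 + t) ^ (-q)) = Real.log (1 + a) := by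
      have h := intervalIntegral.integral_comp_add_left (fun t : ℝ => t ^ (-q)) 1 (a := 0) (b := a)
      rw [h]
      subst hq1
      simp only [Real.rpow_neg_one]
      rw [show (1:ℝ) + 0 = 1 by norm_num]
      rw [integral_inv (by
        rw [Set.uIcc_of_le (by linarith)]
        intro h0
        simp only [Set.mem_Icc] at h0
        linarith [h0.1])]
      rw [div_one]
    rw [hval, if_pos hq1]
    have hlog : Real.log (1 + a) ≤ (1 / ε) * (1 + a) ^ ε := by
      have h1 : Real.log ((1 + a) ^ ε) ≤ (1 + a) ^ ε - 1 :=
        Real.log_le_sub_one_of_pos (Real.rpow_pos_of_pos ha1 ε)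
      rw [Real.log_rpow ha1] at h1
      have h2 : Real.log (1 + a) ≤ ((1 + a) ^ ε - 1) / ε := by
        rw [le_div_iff₀ hε]; linarith [mul_comm ε (Real.log (1 + a))]
      have h3 : ((1 + a) ^ ε - 1) / ε ≤ (1 / ε) * (1 + a) ^ ε := by
        have hεne : ε ≠ 0 := ne_of_gt hε
        rw [div_le_iff₀ hε]
        field_simp
        linarith
      linarith
    exact hlog
  · have key : ∀ a : ℝ, 0 < a →
        (∫ t in (0:ℝ)..a, (1 + t) ^ (-q)) = ((1 + a) ^ (1 - q) - 1) / (1 - q) := by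
      intro a ha
      have h := intervalIntegral.integral_comp_add_left (fun t : ℝ => t ^ (-q)) 1 (a := 0) (b := a)
      rw [h]
      rw [integral_rpow (Or.inr ⟨fun h => hq1 (neg_injective h), by
        rw [Set.uIcc_of_le (by linarith)]
        intro h0
        simp only [Set.mem_Icc] at h0
        linarith [h0.1]⟩)]
      norm_num
      rw [show -q + 1 = 1 - q by ring]
    rcases lt_or_gt_of_ne hq1 with hlt | hgt
    · -- q < 1
      have h1q : (0:ℝ) < 1 - q := by linarith
      refine ⟨1 / (1 - q), by positivity, ?_⟩
      intro a ha
      have ha1 : (0:ℝ) < 1 + a := by linarith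
      rw [key a ha, if_neg hq1, max_eq_right (by linarith : (0:ℝ) ≤ 1 - q)]
      have hpos : (0:ℝ) < (1 + a) ^ (1 - q) := Real.rpow_pos_of_pos ha1 _
      have hne : (1:ℝ) - q ≠ 0 := ne_of_gt h1q
      rw [div_le_iff₀ h1q]
      have heq : (1 / (1 - q)) * (1 + a) ^ (1 - q) * (1 - q) = (1 + a) ^ (1 - q) := by
        field_simp
      rw [heq]
      linarith
    · -- q > 1
      have hq1' : (0:ℝ) < q - 1 := by linarith
      refine ⟨1 / (q - 1), by positivity, ?_⟩
      intro a ha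
      have ha1 : (0:ℝ) < 1 + a := by linarith
      rw [key a ha, if_neg hq1, max_eq_left (by linarith : (1:ℝ) - q ≤ 0)]
      have hle1 : (1 + a) ^ (1 - q) ≤ 1 :=
        Real.rpow_le_one_of_one_le_of_nonpos (by linarith : (1:ℝ) ≤ 1 + a)
          (by linarith : (1:ℝ) - q ≤ 0)
      have hpos : (0:ℝ) < (1 + a) ^ (1 - q) := Real.rpow_pos_of_pos ha1 _
      have heq : ((1 + a) ^ (1 - q) - 1) / (1 - q) = (1 - (1 + a) ^ (1 - q)) / (q - 1) := by
        rw [div_eq_div_iff (by linarith : (1:ℝ) - q ≠ 0) (ne_of_gt hq1')]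
        ring
      rw [Real.rpow_zero, mul_one, heq, div_le_div_iff₀ hq1' hq1']
      nlinarith

/-- Let `p, q > 0` and `ε > 0`. With `m = min {p, p+q-1}` if `q ≠ 1` and
`m = p - ε` if `q = 1`, there is `C = C(p,q,ε) > 0` such that for every `a > 0`,
`∫_0^{2a} (1+|a+x|)^{-p} (1+|a-x|)^{-q} dx ≤ C (1+a)^{-m}`. -/
theorem kernel_near_integral_estimate (p q ε : ℝ) (hp : 0 < p) (hq : 0 < q) (hε : 0 < ε) :
    ∃ C : ℝ, 0 < C ∧ ∀ a : ℝ, 0 < a →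
      (∫⁻ x in Set.Icc (0 : ℝ) (2 * a),
          ENNReal.ofReal ((1 + |a + x|) ^ (-p) * (1 + |a - x|) ^ (-q))) ≤
        ENNReal.ofReal (C * (1 + a) ^ (-(if q = 1 then p - ε else min p (p + q - 1)))) := by
  obtain ⟨K, hK, hKa⟩ := aux_kernel_int q ε hq hε
  set δ : ℝ := if q = 1 then ε else max 0 (1 - q) with hδdef
  set m : ℝ := if q = 1 then p - ε else min p (p + q - 1) with hmdef
  have hδm : -m = -p + δ := by
    by_cases h : q = 1
    · simp only [hδdef, hmdef, if_pos h]; ring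
    · simp only [hδdef, hmdef, if_neg h]
      rcases le_total q 1 with h1 | h1
      · rw [min_eq_right (by linarith), max_eq_right (by linarith)]; ring
      · rw [min_eq_left (by linarith), max_eq_left (by linarith)]; ring
  refine ⟨2 * K, by positivity, ?_⟩
  intro a ha
  have ha1 : (0:ℝ) < 1 + a := by linarith
  have hcq : Continuous fun x : ℝ => (1 + |a - x|) ^ (-q) :=
    (continuous_const.add (continuous_const.sub continuous_id).abs).rpow_const
      (fun x => Or.inl (by show (1:ℝ) + |a - x| ≠ 0; positivity))
  set g : ℝ → ℝ := fun x => (1 + a) ^ (-p) * (1 + |a - x|) ^ (-q) with hgdef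
  have hgc : Continuous g := continuous_const.mul hcq
  have step1 : (∫⁻ x in Set.Icc (0 : ℝ) (2 * a),
      ENNReal.ofReal ((1 + |a + x|) ^ (-p) * (1 + |a - x|) ^ (-q))) ≤
      ∫⁻ x in Set.Icc (0 : ℝ) (2 * a), ENNReal.ofReal (g x) := by
    apply setLIntegral_mono (by
      exact (ENNReal.measurable_ofReal.comp hgc.measurable))
    intro x hx
    apply ENNReal.ofReal_le_ofReal
    apply mul_le_mul_of_nonneg_right _ (Real.rpow_nonneg (by positivity) _)
    apply Real.rpow_le_rpow_of_nonpos ha1 _ (by linarith)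
    have hax : a ≤ |a + x| := le_trans (by linarith [hx.1]) (le_abs_self _)
    linarith
  have hint : IntegrableOn g (Set.Icc (0:ℝ) (2 * a)) volume :=
    hgc.continuousOn.integrableOn_Icc
  have step2 : (∫⁻ x in Set.Icc (0 : ℝ) (2 * a), ENNReal.ofReal (g x)) =
      ENNReal.ofReal (∫ x in Set.Icc (0 : ℝ) (2 * a), g x) := by
    rw [MeasureTheory.ofReal_integral_eq_lintegral_ofReal hint
      (Filter.Eventually.of_forall fun x => by positivity)]
  have hsym : (∫ x in (0:ℝ)..(2 * a), (1 + |a - x|) ^ (-q)) =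
      2 * ∫ t in (0:ℝ)..a, (1 + t) ^ (-q) := by
    rw [← intervalIntegral.integral_add_adjacent_intervals
      (hcq.intervalIntegrable 0 a) (hcq.intervalIntegrable a (2 * a))]
    have h1 : (∫ x in (0:ℝ)..a, (1 + |a - x|) ^ (-q)) = ∫ t in (0:ℝ)..a, (1 + t) ^ (-q) := by
      have he : (∫ x in (0:ℝ)..a, (1 + |a - x|) ^ (-q)) =
          ∫ x in (0:ℝ)..a, (fun t => (1 + t) ^ (-q)) (a - x) := by
        apply intervalIntegral.integral_congr
        intro x hx
        rw [Set.uIcc_of_le (le_of_lt ha)] at hx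
        simp only
        rw [abs_of_nonneg (by linarith [hx.2])]
      rw [he, intervalIntegral.integral_comp_sub_left (fun t => (1 + t) ^ (-q)) a]
      norm_num
    have h2 : (∫ x in a..(2 * a), (1 + |a - x|) ^ (-q)) = ∫ t in (0:ℝ)..a, (1 + t) ^ (-q) := by
      have he : (∫ x in a..(2 * a), (1 + |a - x|) ^ (-q)) =
          ∫ x in a..(2 * a), (fun t => (1 + t) ^ (-q)) (x - a) := by
        apply intervalIntegral.integral_congr
        intro x hx
        rw [Set.uIcc_of_le (by linarith)] at hx
        simp only
        rw [abs_sub_comm, abs_of_nonneg (by linarith [hx.1])]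
      rw [he, intervalIntegral.integral_comp_sub_right (fun t => (1 + t) ^ (-q)) a]
      norm_num
      rw [show 2 * a - a = a by ring]
    rw [h1, h2]; ring
  have hI0 : (0:ℝ) ≤ ∫ t in (0:ℝ)..a, (1 + t) ^ (-q) := by
    apply intervalIntegral.integral_nonneg (le_of_lt ha)
    intro t ht
    have ht0 : (0:ℝ) ≤ t := ht.1
    positivity
  have hreal : (∫ x in Set.Icc (0 : ℝ) (2 * a), g x) ≤ 2 * K * (1 + a) ^ (-m) := by
    have hset : (∫ x in Set.Icc (0 : ℝ) (2 * a), g x) =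
        (1 + a) ^ (-p) * ∫ x in (0:ℝ)..(2 * a), (1 + |a - x|) ^ (-q) := by
      rw [MeasureTheory.integral_Icc_eq_integral_Ioc,
        ← intervalIntegral.integral_of_le (by linarith : (0:ℝ) ≤ 2 * a)]
      simp only [hgdef]
      rw [intervalIntegral.integral_const_mul]
    rw [hset, hsym]
    have hpow : (1 + a) ^ (-p) * (1 + a) ^ δ = (1 + a) ^ (-m) := by
      rw [← Real.rpow_add ha1, ← hδm]
    calc (1 + a) ^ (-p) * (2 * ∫ t in (0:ℝ)..a, (1 + t) ^ (-q))
        ≤ (1 + a) ^ (-p) * (2 * (K * (1 + a) ^ δ)) := by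
          apply mul_le_mul_of_nonneg_left _ (Real.rpow_nonneg (by positivity) _)
          linarith [hKa a ha]
      _ = 2 * K * (1 + a) ^ (-m) := by rw [← hpow]; ring
  calc (∫⁻ x in Set.Icc (0 : ℝ) (2 * a),
          ENNReal.ofReal ((1 + |a + x|) ^ (-p) * (1 + |a - x|) ^ (-q)))
      ≤ ∫⁻ x in Set.Icc (0 : ℝ) (2 * a), ENNReal.ofReal (g x) := step1
    _ = ENNReal.ofReal (∫ x in Set.Icc (0 : ℝ) (2 * a), g x) := step2
    _ ≤ ENNReal.ofReal (2 * K * (1 + a) ^ (-m)) := ENNReal.ofReal_le_ofReal hreal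
end
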